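/- arXiv:1011.5006 — 3 statements merged into one kernel-verified Lean document; each statement's English description precedes it below -/
import Mathlib

section
/- Let V be a finite-dimensional real vector space, let g be a linear automorphism of V of finite order, let C ⊆ V be a pointed polyhedral cone with g(C) = C, and let L_g = {x ∈ V : g·x = x} and C_g = C ∩ L_g. Then the map F ↦ F ∩ L_g is an inclusion-preserving bijection from the set of g-invariant faces of C onto the set of faces of the pointed polyhedral cone C_g. -/
noncomputable section

variable {V : Type*} [AddCommGroup V] [Module ℝ V]

/-- A face of a convex cone `C`: an extreme convex subcone. -/
structure IsFaceOf (C F : Set V) : Prop where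
  subset : F ⊆ C
  zero_mem : (0 : V) ∈ F
  smul_mem : ∀ c : ℝ, 0 ≤ c → ∀ x ∈ F, c • x ∈ F
  add_mem : ∀ x ∈ F, ∀ y ∈ F, x + y ∈ F
  extreme : ∀ x ∈ C, ∀ y ∈ C, x + y ∈ F → x ∈ F ∧ y ∈ F

/-- A pointed polyhedral cone: generated by finitely many vectors and containing no line. -/
def IsPointedPolyhedralCone (C : Set V) : Prop :=
  (∃ s : Finset V, C = {x | ∃ f : V → ℝ, (∀ v, 0 ≤ f v) ∧ x = ∑ v ∈ s, f v • v}) ∧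
    ∀ x ∈ C, -x ∈ C → x = 0

/-- The dimension of the linear span of a subset. -/
def faceDim (F : Set V) : ℕ := Module.finrank ℝ (Submodule.span ℝ F)

open Classical in
/-- `det (t • I - g|span F)`, the characteristic polynomial of the restriction of `g`
to the linear span of `F` (with the junk convention that it is `1` if the span is not
`g`-invariant; for `F = {0}` the span is trivial and the value is `1`). -/
def faceCharpoly [FiniteDimensional ℝ V] (g : Module.End ℝ V) (F : Set V) :
    Polynomial ℝ :=
  if h : ∀ x ∈ Submodule.span ℝ F, g x ∈ Submodule.span ℝ F then
    LinearMap.charpoly (LinearMap.restrict g h)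
  else 1

open Classical in
/-- `det (g|span F)` (with the junk convention `1` if the span is not `g`-invariant). -/
def faceDet (g : Module.End ℝ V) (F : Set V) : ℝ :=
  if h : ∀ x ∈ Submodule.span ℝ F, g x ∈ Submodule.span ℝ F then
    LinearMap.det (LinearMap.restrict g h)
  else 1

/-- Truncation of a polynomial to degrees at most `k`. -/
def truncPoly (k : ℕ) (p : Polynomial ℝ) : Polynomial ℝ :=
  ∑ i ∈ Finset.range (k + 1), Polynomial.C (p.coeff i) * Polynomial.X ^ i

/-- Substitution `t ↦ t⁻¹` in a rational function. -/
def invSubst (f : RatFunc ℝ) : RatFunc ℝ :=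
  RatFunc.eval (algebraMap ℝ (RatFunc ℝ)) (RatFunc.X)⁻¹ f

end


section aux
variable {V : Type*} [AddCommGroup V] [Module ℝ V]

open Classical in
lemma coneOf_props (s : Finset V) (C : Set V)
    (hs : C = {x | ∃ f : V → ℝ, (∀ v, 0 ≤ f v) ∧ x = ∑ v ∈ s, f v • v}) :
    (0 : V) ∈ C ∧ (∀ c : ℝ, 0 ≤ c → ∀ x ∈ C, c • x ∈ C) ∧
      (∀ x ∈ C, ∀ y ∈ C, x + y ∈ C) ∧ (∀ v ∈ s, v ∈ C) := by
  subst hs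
  refine ⟨⟨0, fun v => le_refl 0, by simp⟩, ?_, ?_, ?_⟩
  · rintro c hc x ⟨f, hf, rfl⟩
    exact ⟨fun v => c * f v, fun v => mul_nonneg hc (hf v),
      by rw [Finset.smul_sum]; exact Finset.sum_congr rfl fun v _ => (smul_smul c (f v) v)⟩
  · rintro x ⟨f, hf, rfl⟩ y ⟨f', hf', rfl⟩
    exact ⟨fun v => f v + f' v, fun v => add_nonneg (hf v) (hf' v),
      by rw [← Finset.sum_add_distrib]; exact Finset.sum_congr rfl fun v _ => (add_smul _ _ _).symm⟩
  · intro v hv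
    refine ⟨fun w => if w = v then 1 else 0, fun w => by positivity, ?_⟩
    rw [Finset.sum_congr rfl (fun w _ => ?_), Finset.sum_ite_eq' s v (fun w => w), if_pos hv]
    · split <;> simp_all
   
lemma sum_mem_set {ι : Type*} {S : Set V} (h0 : (0:V) ∈ S)
    (hadd : ∀ x ∈ S, ∀ y ∈ S, x + y ∈ S) (t : Finset ι) (f : ι → V)
    (hf : ∀ i ∈ t, f i ∈ S) : ∑ i ∈ t, f i ∈ S := by
  classical
  induction t using Finset.induction with
  | empty => simpa
  | insert _ _ hx ih =>
    rw [Finset.sum_insert hx]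
    exact hadd _ (hf _ (Finset.mem_insert_self _ _)) _
      (ih fun i hi => hf i (Finset.mem_insert_of_mem hi))

end aux

/-- Let `V` be a finite-dimensional real vector space, `g` a linear
automorphism of `V` of finite order, `C ⊆ V` a pointed polyhedral cone with `g(C) = C`,
`L_g = {x : g x = x}` the fixed subspace and `C_g = C ∩ L_g`.  Then `F ↦ F ∩ L_g` is an
inclusion-preserving bijection from the set of `g`-invariant faces of `C` onto the set of
faces of the pointed polyhedral cone `C_g`. -/
theorem stmt1 {V : Type*} [AddCommGroup V] [Module ℝ V] [FiniteDimensional ℝ V]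
    (g : Module.End ℝ V) (k : ℕ) (hk : 0 < k) (hgk : g ^ k = 1)
    (C : Set V) (hC : IsPointedPolyhedralCone C) (hCg : g '' C = C) :
    IsPointedPolyhedralCone (C ∩ {x | g x = x}) ∧
    (∀ F : Set V, IsFaceOf C F → g '' F = F →
      IsFaceOf (C ∩ {x | g x = x}) (F ∩ {x | g x = x})) ∧
    (∀ F F' : Set V, IsFaceOf C F → g '' F = F → IsFaceOf C F' → g '' F' = F' →
      (F ⊆ F' ↔ F ∩ {x | g x = x} ⊆ F' ∩ {x | g x = x})) ∧
    (∀ F F' : Set V, IsFaceOf C F → g '' F = F → IsFaceOf C F' → g '' F' = F' →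
      F ∩ {x | g x = x} = F' ∩ {x | g x = x} → F = F') ∧
    (∀ G : Set V, IsFaceOf (C ∩ {x | g x = x}) G →
      ∃ F : Set V, IsFaceOf C F ∧ g '' F = F ∧ F ∩ {x | g x = x} = G) := by
  classical
  obtain ⟨⟨s, hs⟩, hpt⟩ := hC
  obtain ⟨h0, hsmul, hadd, hgen⟩ := coneOf_props s C hs
  set L : Set V := {x | g x = x} with hL
  have hk0 : (k : ℝ) ≠ 0 := Nat.cast_ne_zero.2 hk.ne'
  -- g preserves membership in any invariant set
  have hinv : ∀ {F : Set V}, g '' F = F → ∀ (i : ℕ), ∀ x ∈ F, (g ^ i) x ∈ F := by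
    intro F hF i
    induction i with
    | zero => intro x hx; simpa using hx
    | succ n ih =>
      intro x hx
      have h1 : g x ∈ F := hF ▸ ⟨x, hx, rfl⟩
      have h2 := ih _ h1
      rw [pow_succ]
      exact h2
  have hgC : ∀ i : ℕ, ∀ x ∈ C, (g ^ i) x ∈ C := hinv hCg
  -- the averaging operator
  set N : Module.End ℝ V := (k : ℝ)⁻¹ • ∑ i ∈ Finset.range k, g ^ i with hNdef
  have hsum_shift : ∑ i ∈ Finset.range k, g ^ (i + 1) = ∑ i ∈ Finset.range k, g ^ i := by
    have h1 : ∑ i ∈ Finset.range (k + 1), g ^ i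
        = (∑ i ∈ Finset.range k, g ^ (i + 1)) + 1 := by
      simpa using Finset.sum_range_succ' (fun i => g ^ i) k
    have h2 : ∑ i ∈ Finset.range (k + 1), g ^ i
        = (∑ i ∈ Finset.range k, g ^ i) + 1 := by
      rw [Finset.sum_range_succ, hgk]
    exact add_right_cancel (h1.symm.trans h2)
  have hS1 : g * ∑ i ∈ Finset.range k, g ^ i = ∑ i ∈ Finset.range k, g ^ i := by
    rw [Finset.mul_sum]
    calc ∑ i ∈ Finset.range k, g * g ^ i = ∑ i ∈ Finset.range k, g ^ (i + 1) :=
        Finset.sum_congr rfl fun i _ => (pow_succ' g i).symm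
      _ = _ := hsum_shift
  have hS2 : (∑ i ∈ Finset.range k, g ^ i) * g = ∑ i ∈ Finset.range k, g ^ i := by
    rw [Finset.sum_mul]
    calc ∑ i ∈ Finset.range k, g ^ i * g = ∑ i ∈ Finset.range k, g ^ (i + 1) :=
        Finset.sum_congr rfl fun i _ => (pow_succ g i).symm
      _ = _ := hsum_shift
  have hgN : g * N = N := by rw [hNdef, mul_smul_comm, hS1]
  have hNg : N * g = N := by rw [hNdef, smul_mul_assoc, hS2]
  have hNapply : ∀ x, N x = (k : ℝ)⁻¹ • ∑ i ∈ Finset.range k, (g ^ i) x := by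
    intro x; simp [hNdef, LinearMap.sum_apply]
  have hgNx : ∀ x, g (N x) = N x := by
    intro x
    have := congrFun (congrArg DFunLike.coe hgN) x
    simpa using this
  have hNgx : ∀ x, N (g x) = N x := by
    intro x
    have := congrFun (congrArg DFunLike.coe hNg) x
    simpa using this
  have hNgi : ∀ (i : ℕ) (x : V), N ((g ^ i) x) = N x := by
    intro i
    induction i with
    | zero => simp
    | succ n ih =>
      intro x
      have : (g ^ (n + 1)) x = (g ^ n) (g x) := by rw [pow_succ]; rfl
      rw [this, ih (g x), hNgx]
  -- N maps C into C ∩ L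
  have hNmemF : ∀ {F : Set V}, (0:V) ∈ F → (∀ c : ℝ, 0 ≤ c → ∀ x ∈ F, c • x ∈ F) →
      (∀ x ∈ F, ∀ y ∈ F, x + y ∈ F) → g '' F = F → ∀ x ∈ F, N x ∈ F ∩ L := by
    intro F hF0 hFs hFa hFg x hx
    constructor
    · rw [hNapply]
      exact hFs _ (by positivity) _
        (sum_mem_set hF0 hFa _ _ fun i _ => hinv hFg i x hx)
    · exact hgNx x
  have hNmem : ∀ x ∈ C, N x ∈ C ∩ L :=
    hNmemF h0 hsmul hadd hCg
  -- N is the identity on L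
  have hNfix : ∀ x ∈ L, N x = x := by
    intro x hx
    have hfix : ∀ i : ℕ, (g ^ i) x = x := by
      intro i
      induction i with
      | zero => simp
      | succ n ih =>
        have : (g ^ (n + 1)) x = (g ^ n) (g x) := by rw [pow_succ]; rfl
        rw [this, hx, ih]
    rw [hNapply]
    rw [Finset.sum_congr rfl fun i _ => hfix i, Finset.sum_const, Finset.card_range,
      ← Nat.cast_smul_eq_nsmul ℝ, smul_smul, inv_mul_cancel₀ hk0, one_smul]
  have hkN : ∀ x, (k : ℝ) • N x = ∑ i ∈ Finset.range k, (g ^ i) x := by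
    intro x
    rw [hNapply, smul_smul, mul_inv_cancel₀ hk0, one_smul]
  -- decomposition: k • N x = x + (rest in C)
  have hdecomp : ∀ x ∈ C, ∃ r ∈ C, (k : ℝ) • N x = r + x := by
    intro x hx
    obtain ⟨m, rfl⟩ : ∃ m, k = m + 1 := ⟨k - 1, (Nat.succ_pred_eq_of_pos hk).symm⟩
    refine ⟨∑ i ∈ Finset.range m, (g ^ (i + 1)) x, ?_, ?_⟩
    · exact sum_mem_set h0 hadd _ _ fun i _ => hgC _ x hx
    · rw [hkN]
      have := Finset.sum_range_succ' (fun i => (g ^ i) x) m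
      simpa using this
  -- key monotonicity lemma
  have hmono : ∀ F F' : Set V, IsFaceOf C F → g '' F = F → IsFaceOf C F' →
      F ∩ L ⊆ F' ∩ L → F ⊆ F' := by
    intro F F' hF hFg hF' hss x hx
    have hNx : N x ∈ F ∩ L := hNmemF hF.zero_mem hF.smul_mem hF.add_mem hFg x hx
    have hNx' : N x ∈ F' := (hss hNx).1
    have hkNx : (k : ℝ) • N x ∈ F' := hF'.smul_mem _ (by positivity) _ hNx'
    obtain ⟨r, hr, hrx⟩ := hdecomp x (hF.subset hx)
    rw [hrx] at hkNx
    exact (hF'.extreme r hr x (hF.subset hx) hkNx).2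
  refine ⟨?_, ?_, ?_, ?_, ?_⟩
  · -- C ∩ L is a pointed polyhedral cone
    constructor
    · refine ⟨s.image (fun v => N v), Set.Subset.antisymm ?_ ?_⟩
      · rintro x ⟨hxC, hxL⟩
        obtain ⟨f, hf, hx⟩ := hs ▸ hxC
        refine ⟨fun w => ∑ v ∈ s.filter (fun v => N v = w), f v,
          fun w => Finset.sum_nonneg fun v _ => hf v, ?_⟩
        have hxN : x = ∑ v ∈ s, f v • N v := by
          conv_lhs => rw [← hNfix x hxL, hx]
          rw [map_sum]
          exact Finset.sum_congr rfl fun v _ => map_smul N (f v) v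
        rw [hxN]
        refine (Finset.sum_image' (fun v => f v • N v) fun i hi => ?_).symm
        calc (∑ v ∈ s.filter (fun v => N v = N i), f v) • N i
            = ∑ v ∈ s.filter (fun v => N v = N i), f v • N i := by rw [Finset.sum_smul]
          _ = ∑ v ∈ s.filter (fun v => N v = N i), f v • N v :=
            Finset.sum_congr rfl fun v hv => by rw [(Finset.mem_filter.1 hv).2]
      · rintro x ⟨f, hf, rfl⟩
        have h0' : (0:V) ∈ C ∩ L := ⟨h0, by simp [hL]⟩
        have hadd' : ∀ x ∈ C ∩ L, ∀ y ∈ C ∩ L, x + y ∈ C ∩ L := by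
          rintro x ⟨hx, hx'⟩ y ⟨hy, hy'⟩
          have h3 : g (x + y) = x + y := by rw [map_add, hx', hy']
          exact ⟨hadd x hx y hy, h3⟩
        refine sum_mem_set h0' hadd' _ _ fun w hw => ?_
        obtain ⟨v, hv, rfl⟩ := Finset.mem_image.1 hw
        obtain ⟨h1, h2⟩ := hNmem v (hgen v hv)
        have : g ((f (N v)) • N v) = (f (N v)) • N v := by rw [map_smul, h2]
        exact ⟨hsmul _ (hf _) _ h1, this⟩
    · intro x hx hnx
      exact hpt x hx.1 hnx.1
  · -- faces map to faces
    intro F hF hFg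
    refine ⟨fun x hx => ⟨hF.subset hx.1, hx.2⟩, ⟨hF.zero_mem, by simp [hL]⟩, ?_, ?_, ?_⟩
    · rintro c hc x ⟨hx, hx'⟩
      have : g (c • x) = c • x := by rw [map_smul, hx']
      exact ⟨hF.smul_mem c hc x hx, this⟩
    · rintro x ⟨hx, hx'⟩ y ⟨hy, hy'⟩
      have : g (x + y) = x + y := by rw [map_add, hx', hy']
      exact ⟨hF.add_mem x hx y hy, this⟩
    · rintro x ⟨hxC, hxL⟩ y ⟨hyC, hyL⟩ ⟨hxyF, _⟩
      obtain ⟨h1, h2⟩ := hF.extreme x hxC y hyC hxyF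
      exact ⟨⟨h1, hxL⟩, ⟨h2, hyL⟩⟩
  · -- inclusion-preserving
    intro F F' hF hFg hF' hF'g
    exact ⟨fun h x hx => ⟨h hx.1, hx.2⟩, hmono F F' hF hFg hF'⟩
  · -- injectivity
    intro F F' hF hFg hF' hF'g heq
    exact Set.Subset.antisymm (hmono F F' hF hFg hF' heq.le)
      (hmono F' F hF' hF'g hF heq.ge)
  · -- surjectivity
    intro G hG
    refine ⟨{x | x ∈ C ∧ N x ∈ G}, ⟨fun x hx => hx.1, ⟨h0, by simpa using hG.zero_mem⟩,
      ?_, ?_, ?_⟩, ?_, ?_⟩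
    · rintro c hc x ⟨hx, hNx⟩
      exact ⟨hsmul c hc x hx, by rw [map_smul]; exact hG.smul_mem c hc _ hNx⟩
    · rintro x ⟨hx, hNx⟩ y ⟨hy, hNy⟩
      exact ⟨hadd x hx y hy, by rw [map_add]; exact hG.add_mem _ hNx _ hNy⟩
    · rintro x hx y hy ⟨hxy, hNxy⟩
      rw [map_add] at hNxy
      obtain ⟨h1, h2⟩ := hG.extreme (N x) (hNmem x hx) (N y) (hNmem y hy) hNxy
      exact ⟨⟨hx, h1⟩, ⟨hy, h2⟩⟩
    · -- g-invariance of F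
      apply Set.Subset.antisymm
      · rintro _ ⟨x, ⟨hx, hNx⟩, rfl⟩
        exact ⟨hCg ▸ ⟨x, hx, rfl⟩, by rw [hNgx]; exact hNx⟩
      · rintro x ⟨hx, hNx⟩
        refine ⟨(g ^ (k - 1)) x, ⟨hgC _ x hx, by rw [hNgi]; exact hNx⟩, ?_⟩
        have : g * (g ^ (k - 1)) = g ^ k := by
          rw [← pow_succ' g (k - 1), Nat.sub_add_cancel hk]
        calc g ((g ^ (k - 1)) x) = (g * (g ^ (k - 1))) x := rfl
          _ = (g ^ k) x := by rw [this]
          _ = x := by rw [hgk]; rfl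
    · -- F ∩ L = G
      apply Set.Subset.antisymm
      · rintro x ⟨⟨hxC, hNx⟩, hxL⟩
        rwa [hNfix x hxL] at hNx
      · intro x hx
        have hxCL : x ∈ C ∩ L := hG.subset hx
        exact ⟨⟨hxCL.1, by rw [hNfix x hxCL.2]; exact hx⟩, hxCL.2⟩
end

section
/- Let V be a (d+1)-dimensional real vector space, g a linear automorphism of V of finite order, and C ⊆ V a full-dimensional pointed polyhedral cone with g(C) = C. Let ǧ = (g^*)^{-1} be the contragredient automorphism of V^*, which preserves the dual cone Č. Then for any g-invariant faces F ⊆ F′ of C, one has the identity of polynomials in ℝ[t]: det(t·I − g|_{span F′}) · det(t·I − ǧ|_{span (F′)^*}) = det(t·I − g|_{span F}) · det(t·I − ǧ|_{span F^*}), where G^* denotes the dual face of a face G and det(t·I − g|_{span {0}}) := 1. -/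
noncomputable section

variable {V : Type*} [AddCommGroup V] [Module ℝ V]

/-- The dual face `F^* = {u ∈ Č : u|_F = 0} ⊆ Č` of a face `F` of the cone `C`,
where `Č = {u : ∀ x ∈ C, u x ≥ 0}` is the dual cone. -/
def dualFace (C F : Set V) : Set (Module.Dual ℝ V) :=
  {u | (∀ x ∈ C, 0 ≤ u x) ∧ ∀ x ∈ F, u x = 0}

/-- The contragredient `ǧ = (g^*)⁻¹` of an automorphism `g` with `g ^ k = 1`:
it equals the dual map of `g⁻¹ = g^(k-1)`. -/
def contragredient (g : Module.End ℝ V) (k : ℕ) : Module.End ℝ (Module.Dual ℝ V) :=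
  (g ^ (k - 1)).dualMap

end


noncomputable section AuxProof
open Classical

variable {V : Type*} [AddCommGroup V] [Module ℝ V]

def coneOf (s : Finset V) : Set V :=
  {x | ∃ f : V → ℝ, (∀ v, 0 ≤ f v) ∧ x = ∑ v ∈ s, f v • v}

lemma coneOf_zero_mem (s : Finset V) : (0 : V) ∈ coneOf s :=
  ⟨0, fun _ => le_rfl, by simp⟩

lemma coneOf_add_mem {s : Finset V} {x y : V} (hx : x ∈ coneOf s) (hy : y ∈ coneOf s) :
    x + y ∈ coneOf s := by
  obtain ⟨f, hf, rfl⟩ := hx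
  obtain ⟨g, hg, rfl⟩ := hy
  exact ⟨f + g, fun v => add_nonneg (hf v) (hg v), by
    simp [add_smul, Finset.sum_add_distrib]⟩

lemma coneOf_smul_mem {s : Finset V} {x : V} (c : ℝ) (hc : 0 ≤ c) (hx : x ∈ coneOf s) :
    c • x ∈ coneOf s := by
  obtain ⟨f, hf, rfl⟩ := hx
  refine ⟨fun v => c * f v, fun v => mul_nonneg hc (hf v), ?_⟩
  rw [Finset.smul_sum]
  exact Finset.sum_congr rfl fun v _ => by rw [mul_smul]

lemma coneOf_gen_mem {s : Finset V} {v₀ : V} (hv : v₀ ∈ s) : v₀ ∈ coneOf s := by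
  refine ⟨fun v => if v = v₀ then 1 else 0, fun v => by positivity, ?_⟩
  simp only [ite_smul, zero_smul, one_smul]
  simp [hv]

/-- sums over subsets are in the cone -/
lemma coneOf_subset_sum_mem {s t : Finset V} (hts : t ⊆ s) (f : V → ℝ) (hf : ∀ v, 0 ≤ f v) :
    (∑ v ∈ t, f v • v) ∈ coneOf s := by
  refine ⟨fun v => if v ∈ t then f v else 0,
    fun v => by dsimp; split <;> [exact hf v; rfl], ?_⟩
  simp only [ite_smul, zero_smul]
  rw [Finset.sum_ite_mem, Finset.inter_eq_right.mpr hts]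

lemma coneOf_insert_iff {s : Finset V} (a : V) (ha : a ∉ s) {x : V} :
    x ∈ coneOf (insert a s) ↔ ∃ y ∈ coneOf s, ∃ t : ℝ, 0 ≤ t ∧ x = y + t • a := by
  constructor
  · rintro ⟨f, hf, rfl⟩
    rw [Finset.sum_insert ha]
    exact ⟨∑ v ∈ s, f v • v, ⟨f, hf, rfl⟩, f a, hf a, add_comm _ _⟩
  · rintro ⟨y, ⟨f, hf, rfl⟩, t, ht, rfl⟩
    refine ⟨fun v => if v = a then t else f v, fun v => by dsimp; split <;> [exact ht; exact hf v], ?_⟩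
    rw [Finset.sum_insert ha]
    simp only [if_pos rfl]
    rw [add_comm]
    congr 1
    refine Finset.sum_congr rfl fun v hv => ?_
    rw [if_neg (by rintro rfl; exact ha hv)]

theorem weyl [FiniteDimensional ℝ V] (s : Finset V) :
    ∃ T : Finset (Module.Dual ℝ V), coneOf s = {x | ∀ u ∈ T, 0 ≤ u x} := by
  classical
  induction s using Finset.induction_on with
  | empty =>
    set b := Module.finBasis ℝ V
    refine ⟨(Finset.univ.image fun i => b.coord i) ∪ (Finset.univ.image fun i => -b.coord i), ?_⟩
    ext x
    simp only [coneOf, Set.mem_setOf_eq, Finset.sum_empty]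
    constructor
    · rintro ⟨f, hf, rfl⟩ u hu
      simp
    · intro hx
      refine ⟨0, fun _ => le_rfl, ?_⟩
      have h0 : ∀ i, b.coord i x = 0 := by
        intro i
        have h1 := hx (b.coord i) (by simp)
        have h2 := hx (-b.coord i) (by simp)
        simp only [LinearMap.neg_apply, Left.nonneg_neg_iff] at h2
        linarith
      exact b.forall_coord_eq_zero_iff.mp h0
  | @insert a s ha ih =>
    obtain ⟨T, hT⟩ := ih
    have hTmem : ∀ u ∈ T, ∀ y ∈ coneOf s, 0 ≤ u y := by
      intro u hu y hy; rw [hT] at hy; exact hy u hu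
    set T₀ : Finset (Module.Dual ℝ V) := T.filter (fun u => 0 ≤ u a) with hT₀
    set PO : Finset (Module.Dual ℝ V) := T.filter (fun u => 0 < u a) with hPO
    set NE : Finset (Module.Dual ℝ V) := T.filter (fun u => u a < 0) with hNE
    set Tc : Finset (Module.Dual ℝ V) :=
      (PO ×ˢ NE).image (fun p => (p.1 a) • p.2 - (p.2 a) • p.1) with hTc
    have memTc : ∀ u ∈ T, 0 < u a → ∀ w ∈ T, w a < 0 →
        ((u a) • w - (w a) • u) ∈ Tc := by
      intro u hu hua w hw hwa
      rw [hTc]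
      exact Finset.mem_image.mpr ⟨(u, w), Finset.mem_product.mpr
        ⟨Finset.mem_filter.mpr ⟨hu, hua⟩, Finset.mem_filter.mpr ⟨hw, hwa⟩⟩, rfl⟩
    refine ⟨T₀ ∪ Tc, ?_⟩
    ext x
    simp only [Set.mem_setOf_eq]
    constructor
    · -- easy direction
      intro hx u hu
      rw [coneOf_insert_iff a ha] at hx
      obtain ⟨y, hy, t, ht, rfl⟩ := hx
      rcases Finset.mem_union.mp hu with hu | hu
      · rw [Finset.mem_filter] at hu
        have := hTmem u hu.1 y hy
        have := hu.2
        simp only [map_add, map_smul, smul_eq_mul]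
        nlinarith
      · rw [hTc, Finset.mem_image] at hu
        obtain ⟨⟨u₁, u₂⟩, hmem, rfl⟩ := hu
        rw [Finset.mem_product] at hmem
        obtain ⟨h1', h2'⟩ := hmem
        rw [hPO, Finset.mem_filter] at h1'
        rw [hNE, Finset.mem_filter] at h2'
        obtain ⟨hu₁T, hu₁a⟩ := h1'
        obtain ⟨hu₂T, hu₂a⟩ := h2'
        have h1 := hTmem u₁ hu₁T y hy
        have h2 := hTmem u₂ hu₂T y hy
        simp only [LinearMap.sub_apply, LinearMap.smul_apply, smul_eq_mul, map_add, map_smul]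
        nlinarith
    · -- hard direction
      intro hx
      -- choose t
      set cand : Finset ℝ := insert (0:ℝ) (NE.image fun w => w x / w a) with hcand
      have hcne : cand.Nonempty := ⟨0, Finset.mem_insert_self _ _⟩
      set t : ℝ := cand.max' hcne with htdef
      have ht0 : 0 ≤ t := Finset.le_max' _ _ (Finset.mem_insert_self _ _)
      have hT₀x : ∀ u ∈ T, 0 ≤ u a → 0 ≤ u x := by
        intro u hu hua
        exact hx u (Finset.mem_union_left _ (Finset.mem_filter.mpr ⟨hu, hua⟩))
      have hcombo : ∀ u ∈ T, 0 < u a → ∀ w ∈ T, w a < 0 →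
          0 ≤ u a * w x - w a * u x := by
        intro u hu hua w hw hwa
        have := hx ((u a) • w - (w a) • u)
          (Finset.mem_union_right _ (memTc u hu hua w hw hwa))
        simpa using this
      -- upper bounds: for u with u a > 0, t ≤ u x / u a
      have htub : ∀ u ∈ T, 0 < u a → t * u a ≤ u x := by
        intro u hu hua
        have hmem : t ∈ cand := Finset.max'_mem _ _
        rw [hcand, Finset.mem_insert] at hmem
        rcases hmem with h0 | hmem
        · rw [h0, zero_mul]; exact hT₀x u hu (le_of_lt hua)
        · obtain ⟨w, hwNE, hweq⟩ := Finset.mem_image.mp hmem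
          rw [hNE, Finset.mem_filter] at hwNE
          obtain ⟨hwT, hwa⟩ := hwNE
          rw [← hweq, div_mul_eq_mul_div, div_le_iff_of_neg hwa]
          have := hcombo u hu hua w hwT hwa
          nlinarith
      -- lower bounds: for w with w a < 0, w x ≤ t * w a  is wrong direction; we need t ≥ w x / w a
      have htlb : ∀ w ∈ T, w a < 0 → t * w a ≤ w x := by
        intro w hw hwa
        have : w x / w a ≤ t := Finset.le_max' _ _ (by
          rw [hcand]
          exact Finset.mem_insert_of_mem (Finset.mem_image.mpr
            ⟨w, Finset.mem_filter.mpr ⟨hw, hwa⟩, rfl⟩))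
        calc t * w a ≤ (w x / w a) * w a := by nlinarith
          _ = w x := div_mul_cancel₀ _ (ne_of_lt hwa)
      have hy : x - t • a ∈ coneOf s := by
        rw [hT]
        intro u hu
        simp only [map_sub, map_smul, smul_eq_mul, sub_nonneg]
        rcases lt_trichotomy (u a) 0 with h | h | h
        · exact htlb u hu h
        · rw [h, mul_zero]; exact hT₀x u hu (le_of_eq h.symm)
        · exact htub u hu h
      rw [coneOf_insert_iff a ha]
      exact ⟨x - t • a, hy, t, ht0, by abel⟩

/-- each term of a nonnegative combination lying in a face lies in the face -/
lemma face_terms_mem {s : Finset V} {F : Set V} (hF : IsFaceOf (coneOf s) F)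
    (t : Finset V) (hts : t ⊆ s) (f : V → ℝ) (hf : ∀ v, 0 ≤ f v)
    (hsum : (∑ v ∈ t, f v • v) ∈ F) : ∀ v ∈ t, f v • v ∈ F := by
  induction t using Finset.induction_on with
  | empty => intro v hv; exact absurd hv (Finset.notMem_empty v)
  | @insert b t hb ih =>
    have hbs : b ∈ s := hts (Finset.mem_insert_self b t)
    have hts' : t ⊆ s := fun v hv => hts (Finset.mem_insert_of_mem hv)
    rw [Finset.sum_insert hb] at hsum
    have h1 : f b • b ∈ coneOf s := coneOf_smul_mem _ (hf b) (coneOf_gen_mem hbs)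
    have h2 : (∑ v ∈ t, f v • v) ∈ coneOf s := coneOf_subset_sum_mem hts' f hf
    obtain ⟨hb1, hb2⟩ := hF.extreme _ h1 _ h2 hsum
    intro v hv
    rcases Finset.mem_insert.mp hv with rfl | hv
    · exact hb1
    · exact ih hts' hb2 v hv

/-- a face of a finitely generated cone is generated by the generators it contains -/
lemma face_eq_coneOf_filter {s : Finset V} {F : Set V} (hF : IsFaceOf (coneOf s) F) :
    ∀ x ∈ F, x ∈ coneOf (s.filter (· ∈ F)) := by
  intro x hxF
  obtain ⟨f, hf, rfl⟩ := hF.subset hxF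
  have hterm := face_terms_mem hF s (subset_rfl) f hf hxF
  refine ⟨f, hf, ?_⟩
  refine (Finset.sum_filter_of_ne ?_).symm
  intro v hv hne
  by_contra hvF
  have hfv : 0 < f v := lt_of_le_of_ne (hf v) (fun h => by rw [← h, zero_smul] at hne; exact hne rfl)
  have : v ∈ F := by
    have := hF.smul_mem (f v)⁻¹ (by positivity) _ (hterm v hv)
    rwa [inv_smul_smul₀ (ne_of_gt hfv)] at this
  exact hvF this

/-- main geometric lemma: the span of the dual face is the dual annihilator of the span -/
theorem span_dualFace [FiniteDimensional ℝ V] (s : Finset V) {F : Set V}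
    (hF : IsFaceOf (coneOf s) F) :
    Submodule.span ℝ (dualFace (coneOf s) F) = (Submodule.span ℝ F).dualAnnihilator := by
  obtain ⟨T, hT⟩ := weyl s
  set C := coneOf s with hC
  have hTC : ∀ u ∈ T, ∀ x ∈ C, 0 ≤ u x := by
    intro u hu x hx; rw [hT] at hx; exact hx u hu
  set sF : Finset V := s.filter (· ∈ F) with hsF
  have hsFC : ∀ v ∈ sF, v ∈ F := fun v hv => (Finset.mem_filter.mp hv).2
  set xh : V := ∑ v ∈ sF, v with hxh
  have hxhF : xh ∈ F :=
    Finset.sum_induction _ (· ∈ F) (fun a b ha hb => hF.add_mem a ha b hb) hF.zero_mem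
      (fun v hv => hsFC v hv)
  have hxhC : xh ∈ C := hF.subset hxhF
  set I : Finset (Module.Dual ℝ V) := T.filter (fun u => u xh = 0) with hI
  have hIvanish : ∀ u ∈ I, ∀ x ∈ F, u x = 0 := by
    intro u hu x hxF
    rw [hI, Finset.mem_filter] at hu
    obtain ⟨huT, huxh⟩ := hu
    have hv0 : ∀ v ∈ sF, u v = 0 := by
      have hnn : ∀ v ∈ sF, 0 ≤ u v := fun v hv => hTC u huT v (hF.subset (hsFC v hv))
      refine (Finset.sum_eq_zero_iff_of_nonneg hnn).mp ?_
      rw [← map_sum]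
      exact huxh
    obtain ⟨f, hf, hxeq⟩ := face_eq_coneOf_filter hF x hxF
    rw [hxeq, map_sum]
    refine Finset.sum_eq_zero fun v hv => ?_
    rw [map_smul, hv0 v hv, smul_zero]
  set u₀ : Module.Dual ℝ V := ∑ u ∈ I, u with hu₀
  have hu₀app : ∀ x, u₀ x = ∑ u ∈ I, u x := by
    intro x; rw [hu₀]; simp
  have hu₀C : ∀ x ∈ C, 0 ≤ u₀ x := by
    intro x hx
    rw [hu₀app]
    exact Finset.sum_nonneg fun u hu => hTC u (Finset.mem_filter.mp hu).1 x hx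
  have hu₀F : ∀ x ∈ F, u₀ x = 0 := by
    intro x hx
    rw [hu₀app]
    exact Finset.sum_eq_zero fun u hu => hIvanish u hu x hx
  have hsep : ∀ v ∈ C, u₀ v = 0 → v ∈ F := by
    intro v hvC hv0
    have hUI : ∀ u ∈ I, u v = 0 := by
      refine (Finset.sum_eq_zero_iff_of_nonneg
        (fun u hu => hTC u (Finset.mem_filter.mp hu).1 v hvC)).mp ?_ 
      rw [← hu₀app]
      exact hv0
    set εf : Module.Dual ℝ V → ℝ := fun u => if 0 < u v then u xh / u v else 1 with hεf
    set cand : Finset ℝ := insert (1:ℝ) ((T \ I).image εf) with hcand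
    have hne : cand.Nonempty := ⟨1, Finset.mem_insert_self _ _⟩
    set ε := cand.min' hne with hε
    have hxhpos : ∀ u ∈ T, u ∉ I → 0 < u xh := by
      intro u huT huI
      refine lt_of_le_of_ne (hTC u huT xh hxhC) fun h => huI ?_
      rw [hI, Finset.mem_filter]
      exact ⟨huT, h.symm⟩
    have hcandpos : ∀ r ∈ cand, 0 < r := by
      intro r hr
      rw [hcand, Finset.mem_insert] at hr
      rcases hr with rfl | hr
      · norm_num
      · obtain ⟨u, hu, rfl⟩ := Finset.mem_image.mp hr
        obtain ⟨huT, huI⟩ := Finset.mem_sdiff.mp hu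
        rw [hεf]
        dsimp only
        split
        · next hpv => exact div_pos (hxhpos u huT huI) hpv
        · norm_num
    have hεpos : 0 < ε := hcandpos _ (Finset.min'_mem cand hne)
    have hxv : xh - ε • v ∈ C := by
      rw [hT]
      intro u huT
      simp only [Set.mem_setOf_eq, map_sub, map_smul, smul_eq_mul, sub_nonneg]
      by_cases huI : u ∈ I
      · rw [hUI u huI, mul_zero, (Finset.mem_filter.mp huI).2]
      · have hud : u ∈ T \ I := Finset.mem_sdiff.mpr ⟨huT, huI⟩
        by_cases hpv : 0 < u v
        · have h1 : ε ≤ u xh / u v := by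
            have hm : εf u ∈ cand := by
              rw [hcand]
              exact Finset.mem_insert_of_mem (Finset.mem_image.mpr ⟨u, hud, rfl⟩)
            have hle := Finset.min'_le cand _ hm
            have heq : εf u = u xh / u v := by rw [hεf]; dsimp only; rw [if_pos hpv]
            exact le_of_le_of_eq hle heq
          rw [le_div_iff₀ hpv] at h1
          linarith
        · push_neg at hpv
          have := hxhpos u huT huI
          nlinarith
    have hεvC : ε • v ∈ C := coneOf_smul_mem ε (le_of_lt hεpos) hvC
    have hεvF : ε • v ∈ F := by
      refine (hF.extreme _ hxv _ hεvC ?_).2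
      rw [sub_add_cancel]
      exact hxhF
    have := hF.smul_mem ε⁻¹ (by positivity) _ hεvF
    rwa [inv_smul_smul₀ (ne_of_gt hεpos)] at this
  -- now the two inclusions
  apply le_antisymm
  · rw [Submodule.span_le]
    intro u hu
    rw [SetLike.mem_coe, Submodule.mem_dualAnnihilator]
    intro x hx
    have hle : Submodule.span ℝ F ≤ LinearMap.ker u :=
      Submodule.span_le.mpr fun y hy => hu.2 y hy
    exact hle hx
  · intro w hw
    rw [Submodule.mem_dualAnnihilator] at hw
    have hwF : ∀ x ∈ F, w x = 0 := fun x hx => hw x (Submodule.subset_span hx)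
    have hpos : ∀ v ∈ s, v ∉ F → 0 < u₀ v := by
      intro v hvs hvF
      have hvC : v ∈ C := coneOf_gen_mem hvs
      exact lt_of_le_of_ne (hu₀C v hvC) fun h => hvF (hsep v hvC h.symm)
    set cand2 : Finset ℝ := insert (0:ℝ) ((s.filter (· ∉ F)).image fun v => -w v / u₀ v)
      with hcand2
    have hne2 : cand2.Nonempty := ⟨0, Finset.mem_insert_self _ _⟩
    set N := cand2.max' hne2 with hN
    have hN0 : 0 ≤ N := Finset.le_max' _ _ (Finset.mem_insert_self _ _)
    have hNd : ∀ v ∈ s, v ∉ F → 0 ≤ N * u₀ v + w v := by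
      intro v hvs hvF
      have h1 : -w v / u₀ v ≤ N := by
        apply Finset.le_max'
        rw [hcand2]
        exact Finset.mem_insert_of_mem
          (Finset.mem_image.mpr ⟨v, Finset.mem_filter.mpr ⟨hvs, hvF⟩, rfl⟩)
      have h2 := hpos v hvs hvF
      rw [div_le_iff₀ h2] at h1
      linarith
    have happF : ∀ x ∈ F, (N • u₀ + w) x = 0 := by
      intro x hx
      simp [hu₀F x hx, hwF x hx]
    have hmem1 : (N • u₀ + w) ∈ dualFace C F := by
      refine ⟨?_, happF⟩
      rintro x ⟨f, hf, rfl⟩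
      simp only [map_sum, map_smul, smul_eq_mul]
      refine Finset.sum_nonneg fun v hv => ?_
      by_cases hvF : v ∈ F
      · simp [happF v hvF]
      · have := hNd v hv hvF
        have := hf v
        have : (0:ℝ) ≤ (N • u₀ + w) v := by
          simpa using hNd v hv hvF
        positivity
    have hmem2 : (N • u₀) ∈ dualFace C F := by
      refine ⟨fun x hx => ?_, fun x hx => by simp [hu₀F x hx]⟩
      simp only [LinearMap.smul_apply, smul_eq_mul]
      exact mul_nonneg hN0 (hu₀C x hx)
    have hweq : w = (N • u₀ + w) - N • u₀ := by abel
    rw [hweq]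
    exact sub_mem (Submodule.subset_span hmem1) (Submodule.subset_span hmem2)


variable {V₂ : Type*} [AddCommGroup V₂] [Module ℝ V₂]

lemma exists_invariant_form [FiniteDimensional ℝ V] (g : Module.End ℝ V) (k : ℕ) (hk : 0 < k)
    (hgk : g ^ k = 1) :
    ∃ B : LinearMap.BilinForm ℝ V, B.IsRefl ∧ (∀ x : V, x ≠ 0 → 0 < B x x) ∧
      (∀ x y, B (g x) (g y) = B x y) := by
  classical
  set b := Module.finBasis ℝ V with hb
  set B₀ : LinearMap.BilinForm ℝ V := LinearMap.mk₂ ℝ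
    (fun x y => ∑ i, b.repr x i * b.repr y i)
    (by intro x x' y; simp [add_mul, Finset.sum_add_distrib])
    (by intro c x y; simp [Finset.mul_sum, mul_assoc])
    (by intro x y y'; simp [mul_add, Finset.sum_add_distrib])
    (by intro c x y; simp [Finset.mul_sum]; exact Finset.sum_congr rfl fun i _ => by ring)
    with hB₀
  have hB₀app : ∀ x y, B₀ x y = ∑ i, b.repr x i * b.repr y i := fun x y => rfl
  have hB₀symm : ∀ x y, B₀ x y = B₀ y x := by
    intro x y; rw [hB₀app, hB₀app]; exact Finset.sum_congr rfl fun i _ => mul_comm _ _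
  have hB₀pos : ∀ x : V, x ≠ 0 → 0 < B₀ x x := by
    intro x hx
    rw [hB₀app]
    have h1 : ∃ i, b.repr x i ≠ 0 := by
      by_contra h
      push_neg at h
      exact hx (b.forall_coord_eq_zero_iff.mp fun i => by rw [Module.Basis.coord_apply]; exact h i)
    obtain ⟨i, hi⟩ := h1
    exact Finset.sum_pos' (fun j _ => mul_self_nonneg _)
      ⟨i, Finset.mem_univ i, mul_self_pos.mpr hi⟩
  have hB₀nonneg : ∀ x : V, 0 ≤ B₀ x x := by
    intro x
    rw [hB₀app]
    exact Finset.sum_nonneg fun j _ => mul_self_nonneg _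
  set B : LinearMap.BilinForm ℝ V := LinearMap.mk₂ ℝ
    (fun x y => ∑ i ∈ Finset.range k, B₀ ((g ^ i) x) ((g ^ i) y))
    (by intro x x' y; simp [Finset.sum_add_distrib])
    (by intro c x y; simp [Finset.mul_sum])
    (by intro x y y'; simp [Finset.sum_add_distrib])
    (by intro c x y; simp [Finset.mul_sum])
    with hB
  have hBapp : ∀ x y, B x y = ∑ i ∈ Finset.range k, B₀ ((g ^ i) x) ((g ^ i) y) :=
    fun x y => rfl
  have hgk' : ∀ x : V, (g ^ k) x = x := fun x => by rw [hgk]; rfl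
  refine ⟨B, ?_, ?_, ?_⟩
  · intro x y h
    rw [hBapp] at h ⊢
    rw [← h]
    exact Finset.sum_congr rfl fun i _ => hB₀symm _ _
  · intro x hx
    rw [hBapp]
    obtain ⟨m, rfl⟩ : ∃ m, k = m + 1 := ⟨k - 1, (Nat.succ_pred_eq_of_pos hk).symm⟩
    rw [Finset.sum_range_succ']
    have : 0 < B₀ ((g ^ 0) x) ((g ^ 0) x) := by
      simpa using hB₀pos x hx
    refine lt_of_lt_of_le this (le_add_of_nonneg_left ?_)
    exact Finset.sum_nonneg fun i _ => hB₀nonneg _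
  · intro x y
    rw [hBapp, hBapp]
    have hterm : ∀ i, B₀ ((g ^ i) (g x)) ((g ^ i) (g y)) =
        B₀ ((g ^ (i + 1)) x) ((g ^ (i + 1)) y) := by
      intro i
      rw [pow_succ]
      rfl
    rw [Finset.sum_congr rfl fun i _ => hterm i]
    obtain ⟨m, rfl⟩ : ∃ m, k = m + 1 := ⟨k - 1, (Nat.succ_pred_eq_of_pos hk).symm⟩
    rw [Finset.sum_range_succ (fun i => B₀ ((g ^ (i + 1)) x) ((g ^ (i + 1)) y)) m,
      Finset.sum_range_succ' (fun i => B₀ ((g ^ i) x) ((g ^ i) y)) m]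
    congr 1
    simp [hgk' x, hgk' y]

variable {V₂ : Type*} [AddCommGroup V₂] [Module ℝ V₂]

lemma charpoly_restrict_conj [FiniteDimensional ℝ V] [FiniteDimensional ℝ V₂]
    (e : V ≃ₗ[ℝ] V₂) (f : Module.End ℝ V) (f₂ : Module.End ℝ V₂)
    (hcomm : ∀ x, e (f x) = f₂ (e x)) (U : Submodule ℝ V)
    (h : ∀ x ∈ U, f x ∈ U)
    (h₂ : ∀ x ∈ U.map (e : V →ₗ[ℝ] V₂), f₂ x ∈ U.map (e : V →ₗ[ℝ] V₂)) :
    (f₂.restrict h₂).charpoly = (f.restrict h).charpoly := by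
  have hconj : (e.submoduleMap U).conj (f.restrict h) = f₂.restrict h₂ := by
    refine LinearMap.ext fun y => Subtype.ext ?_
    rw [LinearEquiv.conj_apply]
    simp only [LinearMap.comp_apply, LinearEquiv.coe_coe]
    rw [LinearEquiv.submoduleMap_apply, LinearMap.restrict_coe_apply,
      LinearMap.restrict_coe_apply]
    rw [LinearEquiv.submoduleMap_symm_apply, hcomm, LinearEquiv.apply_symm_apply]
  rw [← hconj, LinearEquiv.charpoly_conj]

lemma charpoly_eq_mul_of_isCompl [FiniteDimensional ℝ V] (g : Module.End ℝ V)
    (W U : Submodule ℝ V) (hcompl : IsCompl W U)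
    (hW : ∀ x ∈ W, g x ∈ W) (hU : ∀ x ∈ U, g x ∈ U) :
    g.charpoly = (g.restrict hW).charpoly * (g.restrict hU).charpoly := by
  set P := Submodule.prodEquivOfIsCompl W U hcompl with hP
  have hconj : P.symm.conj g = (g.restrict hW).prodMap (g.restrict hU) := by
    refine LinearMap.ext fun p => ?_
    rw [LinearEquiv.conj_apply]
    simp only [LinearMap.comp_apply, LinearEquiv.coe_coe, LinearEquiv.symm_symm]
    rw [LinearEquiv.symm_apply_eq]
    rw [Submodule.coe_prodEquivOfIsCompl' W U hcompl p,
      Submodule.coe_prodEquivOfIsCompl' W U hcompl _]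
    simp only [LinearMap.prodMap_apply, LinearMap.restrict_coe_apply]
    rw [map_add]
  calc g.charpoly = (P.symm.conj g).charpoly := (LinearEquiv.charpoly_conj _ _).symm
    _ = _ := by rw [hconj, LinearMap.charpoly_prodMap]

lemma faceCharpoly_span_congr [FiniteDimensional ℝ V] (g : Module.End ℝ V) (F : Set V)
    (W : Submodule ℝ V) (hsp : Submodule.span ℝ F = W) (h : ∀ x ∈ W, g x ∈ W) :
    faceCharpoly g F = (g.restrict h).charpoly := by
  subst hsp
  rw [faceCharpoly, dif_pos h]

lemma charpoly_restrict_domcongr [FiniteDimensional ℝ V] (f : Module.End ℝ V)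
    {W₁ W₂ : Submodule ℝ V} (hW : W₁ = W₂)
    (h1 : ∀ x ∈ W₁, f x ∈ W₁) (h2 : ∀ x ∈ W₂, f x ∈ W₂) :
    (f.restrict h1).charpoly = (f.restrict h2).charpoly := by
  subst hW
  rfl

theorem key [FiniteDimensional ℝ V] (g : Module.End ℝ V) (k : ℕ) (hk : 0 < k)
    (hgk : g ^ k = 1) (s : Finset V) {F : Set V}
    (hF : IsFaceOf (coneOf s) F) (hFg : g '' F = F) :
    faceCharpoly g F * faceCharpoly (contragredient g k) (dualFace (coneOf s) F) =
      g.charpoly := by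
  classical
  set W := Submodule.span ℝ F with hWdef
  have hginv : ∀ x ∈ W, g x ∈ W := by
    intro x hx
    have hmapW : Submodule.map g W = W := by
      rw [hWdef, Submodule.map_span, hFg]
    rw [← hmapW]
    exact Submodule.mem_map_of_mem hx
  have hpow : ∀ m, ∀ x ∈ W, (g ^ m) x ∈ W := by
    intro m
    induction m with
    | zero => intro x hx; simpa using hx
    | succ n ih =>
      intro x hx
      rw [pow_succ]
      exact ih _ (hginv x hx)
  have hgky : ∀ y : V, g ((g ^ (k - 1)) y) = y := by
    intro y
    have h1 : g * g ^ (k - 1) = 1 := by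
      rw [← pow_succ', Nat.sub_add_cancel hk]
      exact hgk
    calc g ((g ^ (k - 1)) y) = (g * g ^ (k - 1)) y := rfl
      _ = y := by rw [h1]; rfl
  obtain ⟨B, hrefl, hpos, hinv⟩ := exists_invariant_form g k hk hgk
  have hnd : B.Nondegenerate := by
    refine .ofSeparatingLeft ?_
    intro x hx
    by_contra h0
    have h1 := hpos x h0
    rw [hx x] at h1
    exact lt_irrefl 0 h1
  have hndW : (B.restrict W).Nondegenerate := by
    refine .ofSeparatingLeft ?_
    intro x hx
    by_contra h0
    have hx0 : (x : V) ≠ 0 := fun h => h0 (Subtype.ext h)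
    have h1 := hpos x hx0
    have h2 : B (x : V) (x : V) = 0 := hx x
    rw [h2] at h1
    exact lt_irrefl 0 h1
  set U := B.orthogonal W with hUdef
  have hcompl : IsCompl W U :=
    LinearMap.BilinForm.isCompl_orthogonal_of_restrict_nondegenerate hrefl hndW
  have hUinv : ∀ x ∈ U, g x ∈ U := by
    intro x hx n hn
    show B n (g x) = 0
    calc B n (g x) = B (g ((g ^ (k - 1)) n)) (g x) := by rw [hgky]
      _ = B ((g ^ (k - 1)) n) x := hinv _ _
      _ = 0 := hx _ (hpow (k - 1) n hn)
  set e := B.toDual hnd with hedef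
  have heapp : ∀ x y, e x y = B x y := fun x y => rfl
  have hconj : ∀ x, e (g x) = (contragredient g k) (e x) := by
    intro x
    ext y
    show B (g x) y = (e x) ((g ^ (k - 1)) y)
    rw [heapp]
    calc B (g x) y = B (g x) (g ((g ^ (k - 1)) y)) := by rw [hgky]
      _ = B x ((g ^ (k - 1)) y) := hinv _ _
  have hmap : U.map (e : V →ₗ[ℝ] Module.Dual ℝ V) = W.dualAnnihilator := by
    ext u
    constructor
    · rintro ⟨x, hx, rfl⟩
      rw [Submodule.mem_dualAnnihilator]
      intro w hw
      show B x w = 0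
      exact hrefl _ _ (hx w hw)
    · intro hu
      rw [Submodule.mem_dualAnnihilator] at hu
      refine ⟨e.symm u, ?_, by simp⟩
      intro n hn
      show B n (e.symm u) = 0
      refine hrefl _ _ ?_
      have : B (e.symm u) n = (e (e.symm u)) n := rfl
      rw [this, LinearEquiv.apply_symm_apply]
      exact hu n hn
  have hanninv : ∀ u ∈ W.dualAnnihilator, (contragredient g k) u ∈ W.dualAnnihilator := by
    intro u hu
    rw [Submodule.mem_dualAnnihilator] at hu ⊢
    intro x hx
    show u ((g ^ (k - 1)) x) = 0
    exact hu _ (hpow (k - 1) x hx)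
  have hspan : Submodule.span ℝ (dualFace (coneOf s) F) = W.dualAnnihilator :=
    span_dualFace s hF
  have h1 : faceCharpoly g F = (g.restrict hginv).charpoly :=
    faceCharpoly_span_congr g F W rfl hginv
  have h2 : faceCharpoly (contragredient g k) (dualFace (coneOf s) F) =
      (g.restrict hUinv).charpoly := by
    rw [faceCharpoly_span_congr (contragredient g k) (dualFace (coneOf s) F)
      W.dualAnnihilator hspan hanninv]
    have h₂' : ∀ x ∈ U.map (e : V →ₗ[ℝ] Module.Dual ℝ V),
        (contragredient g k) x ∈ U.map (e : V →ₗ[ℝ] Module.Dual ℝ V) := by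
      rw [hmap]; exact hanninv
    have hcc := charpoly_restrict_conj e g (contragredient g k) hconj U hUinv h₂'
    rw [← hcc]
    exact charpoly_restrict_domcongr (contragredient g k) hmap.symm hanninv h₂'
  rw [h1, h2]
  exact (charpoly_eq_mul_of_isCompl g W U hcompl hginv hUinv).symm


end AuxProof

/-- Let `V` be a `(d+1)`-dimensional real vector space, `g` a linear
automorphism of `V` of finite order, and `C ⊆ V` a full-dimensional pointed polyhedral
cone with `g(C) = C`.  Let `ǧ = (g^*)⁻¹` be the contragredient automorphism of `V^*`.
Then for any `g`-invariant faces `F ⊆ F'` of `C`,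
`det(t·I − g|span F′) · det(t·I − ǧ|span (F′)^*) = det(t·I − g|span F) · det(t·I − ǧ|span F^*)`
as polynomials in `ℝ[t]`. -/
theorem stmt4 {V : Type*} [AddCommGroup V] [Module ℝ V] [FiniteDimensional ℝ V]
    (d : ℕ) (hdim : Module.finrank ℝ V = d + 1)
    (g : Module.End ℝ V) (k : ℕ) (hk : 0 < k) (hgk : g ^ k = 1)
    (C : Set V) (hC : IsPointedPolyhedralCone C) (hfull : faceDim C = d + 1)
    (hCg : g '' C = C)
    (F F' : Set V) (hF : IsFaceOf C F) (hF' : IsFaceOf C F') (hFF' : F ⊆ F')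
    (hFg : g '' F = F) (hF'g : g '' F' = F') :
    faceCharpoly g F' * faceCharpoly (contragredient g k) (dualFace C F') =
      faceCharpoly g F * faceCharpoly (contragredient g k) (dualFace C F) := by
  classical
  obtain ⟨⟨s, hs⟩, -⟩ := hC
  have hs' : C = coneOf s := hs
  rw [hs'] at hF hF' ⊢
  rw [key g k hk hgk s hF' hF'g, key g k hk hgk s hF hFg]
end

section
/- Let d ≥ 1, let P ⊂ ℝ^d be a d-dimensional lattice polytope with P = −P (a centrally symmetric lattice polytope), let C ⊆ ℝ^{d+1} be the cone over P × {1}, and let ε ∈ GL_{d+1}(ℤ) act by −I on ℝ^d and trivially on the height. Then: (i) the only ε-invariant faces of C are {0} and C, and the same holds for the dual cone Č under the contragredient action; (ii) φ_C[t](ε) = (1 + t)^d; and (iii) s̃_ε(C, t) = (−1)^d · t · α_d(t), where α_d(t) = Σ_{i=0}^{d−1} a_i t^i is the unique polynomial of degree d − 1 satisfying a_i = a_{d−1−i} for all 0 ≤ i ≤ d−1 and a_i = binom(d, i) for 0 ≤ i ≤ ⌊(d−1)/2⌋. -/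
noncomputable section

/-- A lattice point of `ℝ^d × ℝ` (the last coordinate is the height). -/
def IsLatticePt {d : ℕ} (v : (Fin d → ℝ) × ℝ) : Prop :=
  (∀ i, ∃ z : ℤ, v.1 i = (z : ℝ)) ∧ ∃ z : ℤ, v.2 = (z : ℝ)

/-- `P` is a lattice polytope: the convex hull of finitely many points of `ℤ^d`. -/
def IsLatticePolytope {d : ℕ} (P : Set (Fin d → ℝ)) : Prop :=
  ∃ s : Finset (Fin d → ℤ),
    P = convexHull ℝ ((fun z : Fin d → ℤ => fun i => ((z i : ℝ))) '' ↑s)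

/-- The cone over `P × {1}` in `ℝ^d × ℝ`. -/
def coneOver {d : ℕ} (P : Set (Fin d → ℝ)) : Set ((Fin d → ℝ) × ℝ) :=
  {x | ∃ c : ℝ, 0 ≤ c ∧ ∃ p ∈ P, x = c • ((p, 1) : (Fin d → ℝ) × ℝ)}

/-- The action of an integer matrix `A` on `ℝ^d`. -/
def actR {d : ℕ} (A : Matrix (Fin d) (Fin d) ℤ) : (Fin d → ℝ) → (Fin d → ℝ) :=
  fun y => (A.map (Int.cast : ℤ → ℝ)).mulVec y

/-- The endomorphism `ρ(γ)` of `ℝ^d × ℝ` acting by the integer matrix `A = γ` on `ℝ^d`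
and trivially on the height. -/
def rhoEnd {d : ℕ} (A : Matrix (Fin d) (Fin d) ℤ) : Module.End ℝ ((Fin d → ℝ) × ℝ) :=
  LinearMap.prodMap (Matrix.mulVecLin (A.map (Int.cast : ℤ → ℝ))) LinearMap.id

/-- `N_γ(F, m)`: the number of `g`-fixed lattice points of `F` of height `m`. -/
def nFix {d : ℕ} (g : Module.End ℝ ((Fin d → ℝ) × ℝ)) (F : Set ((Fin d → ℝ) × ℝ))
    (m : ℕ) : ℕ :=
  Set.ncard {v | v ∈ F ∧ IsLatticePt v ∧ v.2 = (m : ℝ) ∧ g v = v}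

end

noncomputable section

variable {V : Type*} [AddCommGroup V] [Module ℝ V]

/-- The dual cone `Č = {u ∈ V^* : u(x) ≥ 0 for all x ∈ C}`. -/
def dualCone (C : Set V) : Set (Module.Dual ℝ V) := {u | ∀ x ∈ C, 0 ≤ u x}

end

noncomputable section Aux17
namespace Aux17
open Polynomial

variable {d : ℕ}

abbrev eps (d : ℕ) : Module.End ℝ ((Fin d → ℝ) × ℝ) :=
  LinearMap.prodMap (-LinearMap.id) LinearMap.id

lemma eps_apply (x : (Fin d → ℝ) × ℝ) : eps d x = (-x.1, x.2) := rfl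

variable {P : Set (Fin d → ℝ)}

lemma Pconv (hP : IsLatticePolytope P) : Convex ℝ P := by
  obtain ⟨s, rfl⟩ := hP; exact convex_convexHull ℝ _

lemma Pne (hPdim : affineSpan ℝ P = ⊤) : P.Nonempty := by
  by_contra h
  rw [Set.not_nonempty_iff_eq_empty] at h
  rw [h, AffineSubspace.span_empty] at hPdim
  have h2 : ((⊥ : AffineSubspace ℝ (Fin d → ℝ)) : Set (Fin d → ℝ)) = (⊤ : AffineSubspace ℝ (Fin d → ℝ)) := by rw [hPdim]
  simp only [AffineSubspace.bot_coe, AffineSubspace.top_coe] at h2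
  exact Set.empty_ne_univ h2

lemma P0 (hP : IsLatticePolytope P) (hPdim : affineSpan ℝ P = ⊤)
    (hPsym : (fun y : Fin d → ℝ => -y) '' P = P) : (0 : Fin d → ℝ) ∈ P := by
  obtain ⟨x, hx⟩ := Pne hPdim
  have hx' : -x ∈ P := by rw [← hPsym]; exact ⟨x, hx, rfl⟩
  have := (Pconv hP) hx hx' (by norm_num : (0:ℝ) ≤ 1/2) (by norm_num : (0:ℝ) ≤ 1/2) (by norm_num)
  simpa using this

lemma mem_coneOver {x : (Fin d → ℝ) × ℝ} :
    x ∈ coneOver P ↔ ∃ c : ℝ, 0 ≤ c ∧ ∃ p ∈ P, x = c • ((p, 1) : (Fin d → ℝ) × ℝ) :=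
  Iff.rfl

lemma zero_mem_coneOver (hne : P.Nonempty) : (0 : (Fin d → ℝ) × ℝ) ∈ coneOver P := by
  obtain ⟨p, hp⟩ := hne
  exact ⟨0, le_refl _, p, hp, by simp⟩

lemma smul_mem_coneOver {c : ℝ} (hc : 0 ≤ c) {x : (Fin d → ℝ) × ℝ} (hx : x ∈ coneOver P) :
    c • x ∈ coneOver P := by
  obtain ⟨a, ha, p, hp, rfl⟩ := hx
  exact ⟨c * a, mul_nonneg hc ha, p, hp, smul_smul c a _⟩

lemma add_mem_coneOver (hP : IsLatticePolytope P) {x y : (Fin d → ℝ) × ℝ}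
    (hx : x ∈ coneOver P) (hy : y ∈ coneOver P) : x + y ∈ coneOver P := by
  obtain ⟨a, ha, p, hp, rfl⟩ := hx
  obtain ⟨b, hb, q, hq, rfl⟩ := hy
  rcases eq_or_lt_of_le (add_nonneg ha hb) with hab | hab
  · have ha0 : a = 0 := by linarith [ha, hb]
    have hb0 : b = 0 := by linarith
    subst ha0; subst hb0
    simpa using zero_mem_coneOver ⟨p, hp⟩
  · refine ⟨a + b, le_of_lt hab, (a/(a+b)) • p + (b/(a+b)) • q,
      Pconv hP hp hq (div_nonneg ha (le_of_lt hab)) (div_nonneg hb (le_of_lt hab))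
        (by field_simp), ?_⟩
    have hne : a + b ≠ 0 := ne_of_gt hab
    ext
    · simp only [Prod.smul_fst, Prod.fst_add, smul_add, smul_smul]
      rw [mul_div_cancel₀ _ hne, mul_div_cancel₀ _ hne]
    · simp [Prod.snd_add]

lemma height_nonneg {x : (Fin d → ℝ) × ℝ} (hx : x ∈ coneOver P) : 0 ≤ x.2 := by
  obtain ⟨a, ha, p, hp, rfl⟩ := hx
  simpa using ha

lemma snd_eq {x : (Fin d → ℝ) × ℝ} (hx : x ∈ coneOver P) :
    ∃ p ∈ P, x = x.2 • ((p, 1) : (Fin d → ℝ) × ℝ) := by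
  obtain ⟨a, ha, p, hp, rfl⟩ := hx
  exact ⟨p, hp, by simp⟩

lemma pointed_coneOver {x : (Fin d → ℝ) × ℝ} (hx : x ∈ coneOver P)
    (hx' : -x ∈ coneOver P) : x = 0 := by
  have h1 := height_nonneg hx
  have h2 := height_nonneg hx'
  simp only [Prod.snd_neg] at h2
  have : x.2 = 0 := le_antisymm (by linarith) h1
  obtain ⟨a, ha, p, hp, rfl⟩ := hx
  simp only [Prod.smul_snd, smul_eq_mul, mul_one] at this
  subst this; simp


lemma eps_image_coneOver (hPsym : (fun y : Fin d → ℝ => -y) '' P = P) :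
    (eps d) '' coneOver P = coneOver P := by
  have key : ∀ x ∈ coneOver P, eps d x ∈ coneOver P := by
    rintro x ⟨a, ha, p, hp, rfl⟩
    have hp' : -p ∈ P := by rw [← hPsym]; exact ⟨p, hp, rfl⟩
    refine ⟨a, ha, -p, hp', ?_⟩
    rw [eps_apply]
    simp [Prod.ext_iff]
  apply Set.Subset.antisymm
  · rintro _ ⟨x, hx, rfl⟩; exact key x hx
  · intro x hx
    refine ⟨eps d x, key x hx, ?_⟩
    show eps d (eps d x) = x
    rw [eps_apply, eps_apply]; simp

lemma face_self (hP : IsLatticePolytope P) (hPdim : affineSpan ℝ P = ⊤) :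
    IsFaceOf (coneOver P) (coneOver P) where
  subset := le_refl _
  zero_mem := zero_mem_coneOver (Pne hPdim)
  smul_mem := fun c hc x hx => smul_mem_coneOver hc hx
  add_mem := fun x hx y hy => add_mem_coneOver hP hx hy
  extreme := fun x hx y hy _ => ⟨hx, hy⟩

lemma face_zero (hPdim : affineSpan ℝ P = ⊤) :
    IsFaceOf (coneOver P) ({0} : Set ((Fin d → ℝ) × ℝ)) where
  subset := by
    intro x hx; rw [Set.mem_singleton_iff] at hx; subst hx
    exact zero_mem_coneOver (Pne hPdim)
  zero_mem := rfl
  smul_mem := by intro c hc x hx; rw [Set.mem_singleton_iff] at hx ⊢; simp [hx]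
  add_mem := by intro x hx y hy; rw [Set.mem_singleton_iff] at hx hy ⊢; simp [hx, hy]
  extreme := by
    intro x hx y hy hxy
    rw [Set.mem_singleton_iff] at hxy
    have hy' : y = -x := eq_neg_of_add_eq_zero_right hxy
    have hx0 : x = 0 := pointed_coneOver hx (hy' ▸ hy)
    constructor <;> rw [Set.mem_singleton_iff]
    · exact hx0
    · rw [hy', hx0, neg_zero]

lemma face_classification (hP : IsLatticePolytope P) (hPsym : (fun y : Fin d → ℝ => -y) '' P = P)
    {F : Set ((Fin d → ℝ) × ℝ)} (hF : IsFaceOf (coneOver P) F)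
    (hinv : (eps d) '' F = F) : F = {0} ∨ F = coneOver P := by
  by_cases h0 : F = {0}
  · exact Or.inl h0
  right
  -- pick a nonzero element of F
  have hne : ∃ x ∈ F, x ≠ 0 := by
    by_contra h
    push_neg at h
    apply h0
    apply Set.Subset.antisymm
    · intro x hx; rw [Set.mem_singleton_iff]; exact h x hx
    · intro x hx; rw [Set.mem_singleton_iff] at hx; subst hx; exact hF.zero_mem
  obtain ⟨x, hxF, hx0⟩ := hne
  obtain ⟨a, ha, p, hp, hxe⟩ := hF.subset hxF
  have ha' : 0 < a := by
    rcases lt_or_eq_of_le ha with h | h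
    · exact h
    · exfalso; apply hx0; rw [hxe, ← h, zero_smul]
  -- ε x ∈ F
  have hεx : eps d x ∈ F := by rw [← hinv]; exact ⟨x, hxF, rfl⟩
  -- x + εx = (0, 2a) ∈ F
  have hsum : x + eps d x ∈ F := hF.add_mem x hxF _ hεx
  have hsum_eq : x + eps d x = ((0 : Fin d → ℝ), 2 * a) := by
    rw [hxe, eps_apply, Prod.ext_iff]
    constructor
    · simp
    · simp; ring
  -- every a•(q,1) for q ∈ P is in F
  have hq : ∀ q ∈ P, a • ((q, 1) : (Fin d → ℝ) × ℝ) ∈ F := by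
    intro q hq
    have hq' : -q ∈ P := by rw [← hPsym]; exact ⟨q, hq, rfl⟩
    have h1 : a • ((q, 1) : (Fin d → ℝ) × ℝ) ∈ coneOver P := ⟨a, ha, q, hq, rfl⟩
    have h2 : a • ((-q, 1) : (Fin d → ℝ) × ℝ) ∈ coneOver P := ⟨a, ha, -q, hq', rfl⟩
    have h3 : a • ((q, 1) : (Fin d → ℝ) × ℝ) + a • ((-q, 1) : (Fin d → ℝ) × ℝ) = ((0 : Fin d → ℝ), 2 * a) := by
      rw [Prod.ext_iff]
      constructor
      · simp
      · simp; ring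
    exact (hF.extreme _ h1 _ h2 (by rw [h3, ← hsum_eq]; exact hsum)).1
  apply Set.Subset.antisymm hF.subset
  rintro y ⟨b, hb, q, hqP, rfl⟩
  have : (b / a) • (a • ((q, 1) : (Fin d → ℝ) × ℝ)) = b • ((q, 1) : (Fin d → ℝ) × ℝ) := by
    rw [smul_smul, div_mul_cancel₀ _ (ne_of_gt ha')]
  rw [← this]
  exact hF.smul_mem _ (div_nonneg hb ha) _ (hq q hqP)


-- the height functional
abbrev ht (d : ℕ) : Module.Dual ℝ ((Fin d → ℝ) × ℝ) := LinearMap.snd ℝ (Fin d → ℝ) ℝ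

lemma ht_mem_dualCone : ht d ∈ dualCone (coneOver P) := fun x hx => height_nonneg hx

lemma bound_exists (hP : IsLatticePolytope P) (hPdim : affineSpan ℝ P = ⊤)
    (v : Module.Dual ℝ ((Fin d → ℝ) × ℝ)) :
    ∃ μ : ℝ, 0 ≤ μ ∧ ∀ p ∈ P, v (p, 1) ≤ μ := by
  obtain ⟨s, hs⟩ := hP
  have hsne : ((fun z : Fin d → ℤ => fun i => ((z i : ℝ))) '' ↑s).Nonempty := by
    rcases Pne hPdim with ⟨p, hp⟩
    rw [hs] at hp
    rcases Set.eq_empty_or_nonempty ((fun z : Fin d → ℤ => fun i => ((z i : ℝ))) '' ↑s) with h | h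
    · rw [h, convexHull_empty] at hp; exact absurd hp (Set.notMem_empty p)
    · exact h
  obtain ⟨μ₀, hμ₀⟩ : ∃ μ₀ : ℝ, ∀ q ∈ ((fun z : Fin d → ℤ => fun i => ((z i : ℝ))) '' ↑s), v (q, 1) ≤ μ₀ := by
    have hfin : ((fun q : Fin d → ℝ => v (q,1)) '' ((fun z : Fin d → ℤ => fun i => ((z i : ℝ))) '' ↑s)).Finite :=
      ((s.finite_toSet).image _).image _
    obtain ⟨μ₀, hμ₀⟩ := hfin.bddAbove
    exact ⟨μ₀, fun q hq => hμ₀ ⟨q, hq, rfl⟩⟩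
  refine ⟨max μ₀ 0, le_max_right _ _, ?_⟩
  intro p hp
  have hsub : P ⊆ {p | v (p, 1) ≤ max μ₀ 0} := by
    rw [hs]
    apply convexHull_min
    · intro q hq; exact le_trans (hμ₀ q hq) (le_max_left _ _)
    · intro p hp q hq a b ha hb hab
      simp only [Set.mem_setOf_eq] at hp hq ⊢
      have keyp : ((a • p + b • q, 1) : (Fin d → ℝ) × ℝ) = a • ((p,1) : (Fin d → ℝ) × ℝ) + b • ((q,1) : (Fin d → ℝ) × ℝ) := by
        rw [Prod.ext_iff]
        constructor
        · simp
        · simp [hab]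
      rw [keyp, map_add, map_smul, map_smul]
      calc a • v (p,1) + b • v (q,1) ≤ a • max μ₀ 0 + b • max μ₀ 0 := by
            apply add_le_add
            · exact smul_le_smul_of_nonneg_left hp ha
            · exact smul_le_smul_of_nonneg_left hq hb
        _ = max μ₀ 0 := by rw [smul_eq_mul, smul_eq_mul, ← add_mul, hab, one_mul]
  exact hsub hp

lemma dominated (hP : IsLatticePolytope P) (hPdim : affineSpan ℝ P = ⊤)
    (v : Module.Dual ℝ ((Fin d → ℝ) × ℝ)) :
    ∃ μ : ℝ, 0 ≤ μ ∧ μ • ht d - v ∈ dualCone (coneOver P) := by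
  obtain ⟨μ, hμ0, hμ⟩ := bound_exists hP hPdim v
  refine ⟨μ, hμ0, ?_⟩
  rintro x ⟨a, ha, p, hp, rfl⟩
  simp only [LinearMap.sub_apply, LinearMap.smul_apply, map_smul]
  have h1 : (ht d) ((p, 1) : (Fin d → ℝ) × ℝ) = 1 := rfl
  rw [h1]
  have := hμ p hp
  have h2 : a • (v (p,1)) ≤ a • μ := smul_le_smul_of_nonneg_left this ha
  simp only [smul_eq_mul] at h2 ⊢
  nlinarith

lemma span_coneOver_top (hP : IsLatticePolytope P) (hPdim : affineSpan ℝ P = ⊤)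
    (hPsym : (fun y : Fin d → ℝ => -y) '' P = P) :
    Submodule.span ℝ (coneOver P) = ⊤ := by
  have h0 : (0 : Fin d → ℝ) ∈ P := P0 hP hPdim hPsym
  -- (0,1) ∈ C
  have h01 : ((0 : Fin d → ℝ), (1:ℝ)) ∈ coneOver P := ⟨1, zero_le_one, 0, h0, by simp⟩
  -- linear span of P is ⊤
  have hspanP : Submodule.span ℝ P = ⊤ := by
    have : affineSpan ℝ P ≤ (Submodule.span ℝ P).toAffineSubspace := by
      apply affineSpan_le.mpr
      exact Submodule.subset_span
    rw [hPdim] at this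
    rw [eq_top_iff]
    intro x _
    exact this (AffineSubspace.mem_top ℝ _ x)
  rw [eq_top_iff]
  rintro ⟨y, t⟩ _
  -- (p, 1) ∈ span C for p ∈ P, hence (p, 0) ∈ span C
  have hp1 : ∀ p ∈ P, ((p, (1:ℝ)) : (Fin d → ℝ) × ℝ) ∈ Submodule.span ℝ (coneOver P) := by
    intro p hp
    exact Submodule.subset_span ⟨1, zero_le_one, p, hp, by simp⟩
  have h01' : ((0 : Fin d → ℝ), (1:ℝ)) ∈ Submodule.span ℝ (coneOver P) :=
    Submodule.subset_span h01
  have hp0 : ∀ p ∈ P, ((p, (0:ℝ)) : (Fin d → ℝ) × ℝ) ∈ Submodule.span ℝ (coneOver P) := by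
    intro p hp
    have heq : ((p,(0:ℝ)) : (Fin d → ℝ) × ℝ) = (p,1) - ((0:Fin d → ℝ),(1:ℝ)) := by
      rw [Prod.ext_iff]; constructor <;> simp
    rw [heq]
    exact Submodule.sub_mem _ (hp1 p hp) h01'
  -- all (y, 0) ∈ span C
  have hy0 : ∀ y : Fin d → ℝ, ((y, (0:ℝ)) : (Fin d → ℝ) × ℝ) ∈ Submodule.span ℝ (coneOver P) := by
    intro y
    have hy : y ∈ Submodule.span ℝ P := by rw [hspanP]; trivial
    have : Submodule.span ℝ P ≤ Submodule.comap (LinearMap.inl ℝ (Fin d → ℝ) ℝ) (Submodule.span ℝ (coneOver P)) := by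
      apply Submodule.span_le.mpr
      intro p hp
      exact Submodule.mem_comap.mpr (hp0 p hp)
    exact this hy
  have : ((y, t) : (Fin d → ℝ) × ℝ) = (y, 0) + t • ((0:Fin d → ℝ), (1:ℝ)) := by
    rw [Prod.ext_iff]; constructor <;> simp
  rw [this]
  exact Submodule.add_mem _ (hy0 y) (Submodule.smul_mem _ t h01')


abbrev epsd (d : ℕ) : Module.End ℝ (Module.Dual ℝ ((Fin d → ℝ) × ℝ)) :=
  contragredient (eps d) 2

lemma epsd_eq : epsd d = (eps d).dualMap := by
  show ((eps d) ^ (2-1)).dualMap = (eps d).dualMap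
  norm_num

lemma epsd_apply (u : Module.Dual ℝ ((Fin d → ℝ) × ℝ)) (x : (Fin d → ℝ) × ℝ) :
    epsd d u x = u (eps d x) := by
  rw [epsd_eq]; rfl

lemma eps_invol (x : (Fin d → ℝ) × ℝ) : eps d (eps d x) = x := by
  rw [eps_apply, eps_apply]; simp

lemma epsd_invol (u : Module.Dual ℝ ((Fin d → ℝ) × ℝ)) : epsd d (epsd d u) = u := by
  apply LinearMap.ext
  intro x
  rw [epsd_apply, epsd_apply, eps_invol]

lemma epsd_image_dualCone (hPsym : (fun y : Fin d → ℝ => -y) '' P = P) :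
    (epsd d) '' dualCone (coneOver P) = dualCone (coneOver P) := by
  have key : ∀ u ∈ dualCone (coneOver P), epsd d u ∈ dualCone (coneOver P) := by
    intro u hu x hx
    rw [epsd_apply]
    apply hu
    rw [← eps_image_coneOver hPsym]
    exact ⟨x, hx, rfl⟩
  apply Set.Subset.antisymm
  · rintro _ ⟨u, hu, rfl⟩; exact key u hu
  · intro u hu
    exact ⟨epsd d u, key u hu, epsd_invol u⟩

lemma dualCone_pointed (hP : IsLatticePolytope P) (hPdim : affineSpan ℝ P = ⊤)
    (hPsym : (fun y : Fin d → ℝ => -y) '' P = P)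
    {u : Module.Dual ℝ ((Fin d → ℝ) × ℝ)} (hu : u ∈ dualCone (coneOver P))
    (hu' : -u ∈ dualCone (coneOver P)) : u = 0 := by
  have hker : coneOver P ⊆ {x | u x = 0} := by
    intro x hx
    have h1 := hu x hx
    have h2 := hu' x hx
    simp only [LinearMap.neg_apply, Left.nonneg_neg_iff] at h2
    exact le_antisymm h2 h1
  have : Submodule.span ℝ (coneOver P) ≤ LinearMap.ker u := by
    apply Submodule.span_le.mpr
    intro x hx
    exact LinearMap.mem_ker.mpr (hker hx)
  rw [span_coneOver_top hP hPdim hPsym, top_le_iff] at this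
  exact LinearMap.ker_eq_top.mp this

lemma dual_face_self (hP : IsLatticePolytope P) (hPdim : affineSpan ℝ P = ⊤) :
    IsFaceOf (dualCone (coneOver P)) (dualCone (coneOver P)) where
  subset := le_refl _
  zero_mem := by intro x _; simp
  smul_mem := by
    intro c hc u hu x hx
    simp only [LinearMap.smul_apply, smul_eq_mul]
    exact mul_nonneg hc (hu x hx)
  add_mem := by
    intro u hu v hv x hx
    simp only [LinearMap.add_apply]
    exact add_nonneg (hu x hx) (hv x hx)
  extreme := fun x hx y hy _ => ⟨hx, hy⟩

lemma dual_face_zero (hP : IsLatticePolytope P) (hPdim : affineSpan ℝ P = ⊤)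
    (hPsym : (fun y : Fin d → ℝ => -y) '' P = P) :
    IsFaceOf (dualCone (coneOver P)) ({0} : Set (Module.Dual ℝ ((Fin d → ℝ) × ℝ))) where
  subset := by
    intro u hu; rw [Set.mem_singleton_iff] at hu; subst hu; intro x _; simp
  zero_mem := rfl
  smul_mem := by intro c hc u hu; rw [Set.mem_singleton_iff] at hu ⊢; simp [hu]
  add_mem := by intro u hu v hv; rw [Set.mem_singleton_iff] at hu hv ⊢; simp [hu, hv]
  extreme := by
    intro u hu v hv huv
    rw [Set.mem_singleton_iff] at huv
    have hv' : v = -u := eq_neg_of_add_eq_zero_right huv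
    have hu0 : u = 0 := dualCone_pointed hP hPdim hPsym hu (hv' ▸ hv)
    constructor <;> rw [Set.mem_singleton_iff]
    · exact hu0
    · rw [hv', hu0, neg_zero]

lemma dual_face_classification (hP : IsLatticePolytope P) (hPdim : affineSpan ℝ P = ⊤)
    (hPsym : (fun y : Fin d → ℝ => -y) '' P = P)
    {G : Set (Module.Dual ℝ ((Fin d → ℝ) × ℝ))} (hG : IsFaceOf (dualCone (coneOver P)) G)
    (hinv : (epsd d) '' G = G) : G = {0} ∨ G = dualCone (coneOver P) := by
  by_cases h0 : G = {0}
  · exact Or.inl h0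
  right
  have hne : ∃ u ∈ G, u ≠ 0 := by
    by_contra h
    push_neg at h
    apply h0
    apply Set.Subset.antisymm
    · intro u hu; rw [Set.mem_singleton_iff]; exact h u hu
    · intro u hu; rw [Set.mem_singleton_iff] at hu; subst hu; exact hG.zero_mem
  obtain ⟨u, huG, hu0⟩ := hne
  -- w := u + ε̌u = λ • ht with λ > 0
  have hεu : epsd d u ∈ G := by rw [← hinv]; exact ⟨u, huG, rfl⟩
  have hw : u + epsd d u ∈ G := hG.add_mem u huG _ hεu
  set lam := u ((0 : Fin d → ℝ), (1:ℝ)) + u ((0 : Fin d → ℝ), (1:ℝ)) with hlam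
  have hw_eq : u + epsd d u = lam • ht d := by
    apply LinearMap.ext
    rintro ⟨y, t⟩
    simp only [LinearMap.add_apply, LinearMap.smul_apply]
    rw [epsd_apply, eps_apply]
    have hd1 : ((y, t) : (Fin d → ℝ) × ℝ) = (y, 0) + t • ((0:Fin d → ℝ), (1:ℝ)) := by
      rw [Prod.ext_iff]; constructor <;> simp
    have hd2 : ((-y, t) : (Fin d → ℝ) × ℝ) = -((y,(0:ℝ)) : (Fin d → ℝ) × ℝ) + t • ((0:Fin d → ℝ), (1:ℝ)) := by
      rw [Prod.ext_iff]; constructor <;> simp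
    show u (y, t) + u (-y, t) = lam • t
    rw [hd2, hd1]
    simp only [map_add, map_neg, map_smul, smul_eq_mul]
    ring
  -- lam > 0
  have hlam_nonneg : 0 ≤ lam := by
    have h01 : ((0 : Fin d → ℝ), (1:ℝ)) ∈ coneOver P :=
      ⟨1, zero_le_one, 0, P0 hP hPdim hPsym, by simp⟩
    have h1 := hG.subset huG _ h01
    have h2 := hG.subset hεu _ h01
    rw [epsd_apply, eps_apply] at h2
    simp only [neg_zero] at h2
    rw [hlam]
    linarith
  have hlam_pos : 0 < lam := by
    rcases lt_or_eq_of_le hlam_nonneg with h | h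
    · exact h
    · exfalso
      apply hu0
      have hw0 : u + epsd d u = 0 := by rw [hw_eq, ← h, zero_smul]
      have : epsd d u = -u := eq_neg_of_add_eq_zero_right hw0
      apply dualCone_pointed hP hPdim hPsym (hG.subset huG)
      rw [← this]
      exact hG.subset hεu
  -- ht ∈ G
  have hhtG : ht d ∈ G := by
    have := hG.smul_mem lam⁻¹ (le_of_lt (inv_pos.mpr hlam_pos)) _ hw
    rw [hw_eq, smul_smul, inv_mul_cancel₀ (ne_of_gt hlam_pos), one_smul] at this
    exact this
  -- every v ∈ Č is in G
  apply Set.Subset.antisymm hG.subset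
  intro v hv
  obtain ⟨μ, hμ0, hμ⟩ := dominated hP hPdim v
  have hsum : v + (μ • ht d - v) = μ • ht d := by abel
  exact (hG.extreme v hv _ hμ (by rw [hsum]; exact hG.smul_mem μ hμ0 _ hhtG)).1

lemma span_dualCone_top (hP : IsLatticePolytope P) (hPdim : affineSpan ℝ P = ⊤) :
    Submodule.span ℝ (dualCone (coneOver P)) = ⊤ := by
  rw [eq_top_iff]
  intro v _
  obtain ⟨μ, hμ0, hμ⟩ := dominated hP hPdim v
  have : v = μ • ht d - (μ • ht d - v) := by abel
  rw [this]
  exact Submodule.sub_mem _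
    (Submodule.smul_mem _ μ (Submodule.subset_span ht_mem_dualCone))
    (Submodule.subset_span hμ)


section LinAlg

lemma charpoly_diagonal {n : Type*} [Fintype n] [DecidableEq n] (v : n → ℝ) :
    (Matrix.diagonal v).charpoly = ∏ i, (X - C (v i)) := by
  have h : Matrix.charmatrix (Matrix.diagonal v) = Matrix.diagonal (fun i => X - C (v i)) := by
    refine Matrix.ext fun i j => ?_
    by_cases hij : i = j
    · subst hij
      rw [Matrix.charmatrix_apply_eq]
      simp
    · rw [Matrix.charmatrix_apply_ne _ _ _ hij, Matrix.diagonal_apply_ne _ hij,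
        Matrix.diagonal_apply_ne _ hij, map_zero, neg_zero]
  rw [Matrix.charpoly, h, Matrix.det_diagonal]

-- the standard basis of (Fin d → ℝ) × ℝ
abbrev stdB (d : ℕ) : Module.Basis (Fin d ⊕ Unit) ℝ ((Fin d → ℝ) × ℝ) :=
  (Pi.basisFun ℝ (Fin d)).prod (Module.Basis.singleton Unit ℝ)

abbrev sgn (d : ℕ) : Fin d ⊕ Unit → ℝ := Sum.elim (fun _ => (-1 : ℝ)) (fun _ => (1 : ℝ))

lemma eps_basis (j : Fin d ⊕ Unit) : eps d (stdB d j) = sgn d j • stdB d j := by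
  cases j with
  | inl i =>
    have h1 : (stdB d (Sum.inl i)).2 = 0 := Module.Basis.prod_apply_inl_snd _ _ i
    rw [eps_apply, Prod.ext_iff]
    constructor
    · simp
    · simp [h1]
  | inr u =>
    have h1 : (stdB d (Sum.inr u)).1 = 0 := Module.Basis.prod_apply_inr_fst _ _ u
    rw [eps_apply, Prod.ext_iff]
    constructor
    · simp [h1]
    · simp

lemma toMatrix_eps : LinearMap.toMatrix (stdB d) (stdB d) (eps d) = Matrix.diagonal (sgn d) := by
  ext i j
  rw [LinearMap.toMatrix_apply, eps_basis, map_smul, Module.Basis.repr_self]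
  rw [Finsupp.smul_single, smul_eq_mul, mul_one, Finsupp.single_apply, Matrix.diagonal_apply]
  by_cases h : i = j
  · subst h; simp
  · rw [if_neg (fun hh => h hh.symm), if_neg h]

lemma prod_sgn : (∏ i, (X - C (sgn d i)) : ℝ[X]) = (X + 1) ^ d * (X - 1) := by
  rw [Fintype.prod_sum_type]
  have h1 : (∏ i : Fin d, (X - C (sgn d (Sum.inl i))) : ℝ[X]) = (X + 1) ^ d := by
    simp only [Sum.elim_inl, map_neg, map_one, sub_neg_eq_add]
    rw [Finset.prod_const]
    simp
  have h2 : (∏ u : Unit, (X - C (sgn d (Sum.inr u))) : ℝ[X]) = X - 1 := by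
    simp
  rw [h1, h2]

lemma charpoly_eps : (eps d : Module.End ℝ ((Fin d → ℝ) × ℝ)).charpoly = (X + 1) ^ d * (X - 1) := by
  rw [← LinearMap.charpoly_toMatrix (eps d) (stdB d), toMatrix_eps, charpoly_diagonal, prod_sgn]

lemma charpoly_eps_dual :
    ((eps d).dualMap : Module.End ℝ (Module.Dual ℝ ((Fin d → ℝ) × ℝ))).charpoly
      = (X + 1) ^ d * (X - 1) := by
  rw [← LinearMap.charpoly_toMatrix ((eps d).dualMap) (stdB d).dualBasis]
  rw [LinearMap.dualMap_def, LinearMap.toMatrix_transpose, toMatrix_eps,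
    Matrix.diagonal_transpose, charpoly_diagonal, prod_sgn]

lemma det_eps : LinearMap.det (eps d : Module.End ℝ ((Fin d → ℝ) × ℝ)) = (-1) ^ d := by
  rw [← LinearMap.det_toMatrix (stdB d), toMatrix_eps, Matrix.det_diagonal]
  rw [Fintype.prod_sum_type]
  simp

variable {V : Type*} [AddCommGroup V] [Module ℝ V] [FiniteDimensional ℝ V]

lemma face_top_spec (g : Module.End ℝ V) (F : Set V) (hspan : Submodule.span ℝ F = ⊤) :
    faceCharpoly g F = g.charpoly ∧ faceDet g F = LinearMap.det g := by
  have hcond : ∀ x ∈ Submodule.span ℝ F, g x ∈ Submodule.span ℝ F := by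
    intro x _; rw [hspan]; trivial
  have hre : LinearMap.restrict g hcond = (LinearEquiv.ofTop _ hspan).symm.conj g := by
    apply LinearMap.ext
    intro x
    apply Subtype.ext
    rw [LinearMap.restrict_apply]
    simp [LinearEquiv.conj_apply]
  constructor
  · rw [faceCharpoly, dif_pos hcond, hre, LinearEquiv.charpoly_conj]
  · rw [faceDet, dif_pos hcond, hre]
    have : ((LinearEquiv.ofTop _ hspan).symm.conj g)
        = (((LinearEquiv.ofTop _ hspan).symm : V →ₗ[ℝ] Submodule.span ℝ F) ∘ₗ g ∘ₗ
           (((LinearEquiv.ofTop _ hspan).symm.symm : Submodule.span ℝ F →ₗ[ℝ] V))) := rfl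
    rw [this, LinearMap.det_conj]

lemma span_zero_cond (g : Module.End ℝ V) :
    ∀ x ∈ Submodule.span ℝ ({0} : Set V), g x ∈ Submodule.span ℝ ({0} : Set V) := by
  intro x hx
  rw [Submodule.span_zero_singleton] at hx ⊢
  rw [Submodule.mem_bot] at hx ⊢
  rw [hx, map_zero]

lemma finrank_span_zero : Module.finrank ℝ (Submodule.span ℝ ({0} : Set V)) = 0 := by
  rw [Submodule.span_zero_singleton, finrank_bot]

lemma faceCharpoly_zero (g : Module.End ℝ V) : faceCharpoly g ({0} : Set V) = 1 := by
  rw [faceCharpoly, dif_pos (span_zero_cond g)]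
  set f := LinearMap.restrict g (span_zero_cond g)
  have hmono : f.charpoly.Monic := LinearMap.charpoly_monic f
  have hdeg : f.charpoly.natDegree = 0 := by
    rw [LinearMap.charpoly_natDegree, finrank_span_zero]
  have := Polynomial.eq_C_of_natDegree_eq_zero hdeg
  rw [this]
  have : f.charpoly.coeff 0 = 1 := by
    have h := hmono.leadingCoeff
    rw [Polynomial.leadingCoeff, hdeg] at h
    exact h
  rw [this, map_one]

lemma faceDet_zero (g : Module.End ℝ V) : faceDet g ({0} : Set V) = 1 := by
  rw [faceDet, dif_pos (span_zero_cond g)]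
  exact LinearMap.det_eq_one_of_finrank_eq_zero (finrank_span_zero (V := V)) _

lemma faceDim_zero : faceDim ({0} : Set V) = 0 := finrank_span_zero

lemma faceDim_top {F : Set V} (hspan : Submodule.span ℝ F = ⊤) :
    faceDim F = Module.finrank ℝ V := by
  rw [faceDim, hspan, finrank_top]

lemma finrank_Vd : Module.finrank ℝ ((Fin d → ℝ) × ℝ) = d + 1 := by
  rw [Module.finrank_prod]
  simp

lemma finrank_dual_Vd : Module.finrank ℝ (Module.Dual ℝ ((Fin d → ℝ) × ℝ)) = d + 1 := by
  have h := Subspace.dual_finrank_eq (K := ℝ) (V := (Fin d → ℝ) × ℝ)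
  rw [h, finrank_Vd]

end LinAlg


section Phi

lemma nFix_coneOver (hP : IsLatticePolytope P) (hPdim : affineSpan ℝ P = ⊤)
    (hPsym : (fun y : Fin d → ℝ => -y) '' P = P) (m : ℕ) :
    nFix (eps d) (coneOver P) m = 1 := by
  have h0 : (0 : Fin d → ℝ) ∈ P := P0 hP hPdim hPsym
  have hset : {v | v ∈ coneOver P ∧ IsLatticePt v ∧ v.2 = (m : ℝ) ∧ eps d v = v}
      = {(((0 : Fin d → ℝ), (m : ℝ)) : (Fin d → ℝ) × ℝ)} := by
    apply Set.Subset.antisymm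
    · rintro v ⟨hvC, hlat, hht, hfix⟩
      rw [Set.mem_singleton_iff]
      have h2 : -v.1 = v.1 := congrArg Prod.fst hfix
      have h3 : (2 : ℝ) • v.1 = 0 := by
        rw [two_smul]
        nth_rewrite 1 [← h2]
        rw [neg_add_cancel]
      have h1 : v.1 = 0 := by
        rcases smul_eq_zero.mp h3 with h | h
        · norm_num at h
        · exact h
      rw [Prod.ext_iff]
      exact ⟨h1, hht⟩
    · intro v hv
      rw [Set.mem_singleton_iff] at hv
      subst hv
      refine ⟨⟨m, Nat.cast_nonneg m, 0, h0, ?_⟩, ⟨fun i => ⟨0, by simp⟩, ⟨m, rfl⟩⟩, rfl, ?_⟩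
      · rw [Prod.ext_iff]
        constructor <;> simp
      · rw [eps_apply]
        simp
  rw [nFix, hset, Set.ncard_singleton]

lemma nFix_zeroface (m : ℕ) :
    nFix (eps d) ({0} : Set ((Fin d → ℝ) × ℝ)) m = if m = 0 then 1 else 0 := by
  have hset : {v | v ∈ ({0} : Set ((Fin d → ℝ) × ℝ)) ∧ IsLatticePt v ∧ v.2 = (m : ℝ) ∧ eps d v = v}
      = if m = 0 then {(0 : (Fin d → ℝ) × ℝ)} else ∅ := by
    split_ifs with hm
    · subst hm
      apply Set.Subset.antisymm
      · rintro v ⟨hv, _⟩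
        exact hv
      · intro v hv
        rw [Set.mem_singleton_iff] at hv
        subst hv
        exact ⟨rfl, ⟨fun i => ⟨0, by simp⟩, ⟨0, by simp⟩⟩, by simp, by rw [eps_apply]; simp⟩
    · apply Set.eq_empty_iff_forall_notMem.mpr
      rintro v ⟨hv, _, hht, _⟩
      rw [Set.mem_singleton_iff] at hv
      subst hv
      have : ((m : ℝ)) = 0 := by rw [← hht]; rfl
      exact hm (by exact_mod_cast this)
  rw [nFix, hset]
  split_ifs
  · rw [Set.ncard_singleton]
  · rw [Set.ncard_empty]

lemma reverse_X_add_one : (X + 1 : ℝ[X]).reverse = 1 + X := by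
  have hdeg : (X + 1 : ℝ[X]).natDegree = 1 := by
    simpa using Polynomial.natDegree_X_add_C (1:ℝ)
  ext n
  rw [Polynomial.coeff_reverse, hdeg]
  match n with
  | 0 =>
    rw [Polynomial.revAt_le (by norm_num)]
    simp [Polynomial.coeff_X, Polynomial.coeff_one]
  | 1 =>
    rw [Polynomial.revAt_le (by norm_num)]
    simp [Polynomial.coeff_X, Polynomial.coeff_one]
  | (k+2) =>
    rw [Polynomial.revAt_eq_self_of_lt (by omega)]
    simp [Polynomial.coeff_X, Polynomial.coeff_one]

lemma reverse_X_sub_one : (X - 1 : ℝ[X]).reverse = 1 - X := by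
  have hdeg : (X - 1 : ℝ[X]).natDegree = 1 := by
    simpa using Polynomial.natDegree_X_sub_C (1:ℝ)
  ext n
  rw [Polynomial.coeff_reverse, hdeg]
  match n with
  | 0 =>
    rw [Polynomial.revAt_le (by norm_num)]
    simp [Polynomial.coeff_X, Polynomial.coeff_one]
  | 1 =>
    rw [Polynomial.revAt_le (by norm_num)]
    simp [Polynomial.coeff_X, Polynomial.coeff_one]
  | (k+2) =>
    rw [Polynomial.revAt_eq_self_of_lt (by omega)]
    simp [Polynomial.coeff_X, Polynomial.coeff_one]

lemma reverse_one' : (1 : ℝ[X]).reverse = 1 := by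
  rw [← Polynomial.C_1, Polynomial.reverse_C]

lemma reverse_pow_X_add_one (n : ℕ) : ((X + 1 : ℝ[X]) ^ n).reverse = (1 + X) ^ n := by
  induction n with
  | zero => simp [reverse_one']
  | succ k ih =>
    rw [pow_succ, Polynomial.reverse_mul_of_domain, ih, reverse_X_add_one, pow_succ]

lemma reverse_eps_charpoly :
    ((X + 1 : ℝ[X]) ^ d * (X - 1)).reverse = (1 + X) ^ d * (1 - X) := by
  rw [Polynomial.reverse_mul_of_domain, reverse_pow_X_add_one, reverse_X_sub_one]

lemma PS_cone (hP : IsLatticePolytope P) (hPdim : affineSpan ℝ P = ⊤)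
    (hPsym : (fun y : Fin d → ℝ => -y) '' P = P) :
    ((PowerSeries.mk fun m => (nFix (eps d) (coneOver P) m : ℝ)) *
        ((faceCharpoly (eps d) (coneOver P)).reverse : PowerSeries ℝ))
      = (((1 + X : ℝ[X]) ^ d : ℝ[X]) : PowerSeries ℝ) := by
  have hmk : (PowerSeries.mk fun m => (nFix (eps d) (coneOver P) m : ℝ))
      = PowerSeries.mk (1 : ℕ → ℝ) := by
    have hfun : (fun m : ℕ => (nFix (eps d) (coneOver P) m : ℝ)) = (1 : ℕ → ℝ) := by
      funext m
      rw [nFix_coneOver hP hPdim hPsym m]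
      simp
    rw [hfun]
  have hcp : faceCharpoly (eps d) (coneOver P) = (X + 1) ^ d * (X - 1) := by
    rw [(face_top_spec (eps d) (coneOver P) (span_coneOver_top hP hPdim hPsym)).1, charpoly_eps]
  rw [hmk, hcp, reverse_eps_charpoly]
  push_cast
  rw [← mul_assoc, mul_comm (PowerSeries.mk (1 : ℕ → ℝ)) _, mul_assoc,
    PowerSeries.mk_one_mul_one_sub_eq_one, mul_one]

lemma PS_zeroface :
    ((PowerSeries.mk fun m => (nFix (eps d) ({0} : Set ((Fin d → ℝ) × ℝ)) m : ℝ)) *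
        ((faceCharpoly (eps d) ({0} : Set ((Fin d → ℝ) × ℝ))).reverse : PowerSeries ℝ))
      = 1 := by
  rw [faceCharpoly_zero, reverse_one']
  have : (PowerSeries.mk fun m => (nFix (eps d) ({0} : Set ((Fin d → ℝ) × ℝ)) m : ℝ))
      = 1 := by
    ext n
    rw [PowerSeries.coeff_mk, PowerSeries.coeff_one, nFix_zeroface]
    split_ifs <;> simp
  rw [this, Polynomial.coe_one, mul_one]

lemma coe_ratfunc_poly (p : ℝ[X]) :
    ((algebraMap (Polynomial ℝ) (RatFunc ℝ) p : RatFunc ℝ) : LaurentSeries ℝ)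
      = ((p : PowerSeries ℝ) : LaurentSeries ℝ) :=
  (RatFunc.coe_coe p).symm

end Phi


section Assemble

lemma eps_image_zero : (eps d) '' ({0} : Set ((Fin d → ℝ) × ℝ)) = {0} := by
  rw [Set.image_singleton, map_zero]

lemma epsd_image_zero : (epsd d) '' ({0} : Set (Module.Dual ℝ ((Fin d → ℝ) × ℝ))) = {0} := by
  rw [Set.image_singleton, map_zero]

lemma coneOver_ne_zero (hP : IsLatticePolytope P) (hPdim : affineSpan ℝ P = ⊤)
    (hPsym : (fun y : Fin d → ℝ => -y) '' P = P) :
    coneOver P ≠ ({0} : Set ((Fin d → ℝ) × ℝ)) := by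
  intro h
  have h01 : (((0 : Fin d → ℝ), (1:ℝ)) : (Fin d → ℝ) × ℝ) ∈ coneOver P :=
    ⟨1, zero_le_one, 0, P0 hP hPdim hPsym, by simp⟩
  rw [h, Set.mem_singleton_iff, Prod.ext_iff] at h01
  exact one_ne_zero h01.2

lemma ht_ne_zero : (ht d : Module.Dual ℝ ((Fin d → ℝ) × ℝ)) ≠ 0 := by
  intro h
  have : (ht d) (((0 : Fin d → ℝ), (1:ℝ)) : (Fin d → ℝ) × ℝ) = 1 := rfl
  rw [h] at this
  simp at this

lemma dualCone_ne_zero : dualCone (coneOver P) ≠ ({0} : Set (Module.Dual ℝ ((Fin d → ℝ) × ℝ))) := by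
  intro h
  have := ht_mem_dualCone (d := d) (P := P)
  rw [h, Set.mem_singleton_iff] at this
  exact ht_ne_zero this

lemma vanish_eq_zero (hP : IsLatticePolytope P) (hPdim : affineSpan ℝ P = ⊤)
    (hPsym : (fun y : Fin d → ℝ => -y) '' P = P)
    {u : Module.Dual ℝ ((Fin d → ℝ) × ℝ)} (hu : ∀ x ∈ coneOver P, u x = 0) : u = 0 := by
  apply dualCone_pointed hP hPdim hPsym (fun x hx => le_of_eq (hu x hx).symm)
  intro x hx
  simp [hu x hx]

lemma dualFace_zeroface :
    dualFace (coneOver P) ({0} : Set ((Fin d → ℝ) × ℝ)) = dualCone (coneOver P) := by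
  apply Set.Subset.antisymm
  · rintro u ⟨h1, _⟩; exact h1
  · intro u hu
    refine ⟨hu, ?_⟩
    intro x hx
    rw [Set.mem_singleton_iff] at hx
    rw [hx, map_zero]

lemma dualFace_selfface (hP : IsLatticePolytope P) (hPdim : affineSpan ℝ P = ⊤)
    (hPsym : (fun y : Fin d → ℝ => -y) '' P = P) :
    dualFace (coneOver P) (coneOver P) = ({0} : Set (Module.Dual ℝ ((Fin d → ℝ) × ℝ))) := by
  apply Set.Subset.antisymm
  · rintro u ⟨_, h2⟩
    rw [Set.mem_singleton_iff]
    exact vanish_eq_zero hP hPdim hPsym h2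
  · intro u hu
    rw [Set.mem_singleton_iff] at hu
    subst hu
    exact ⟨fun x _ => le_refl _, fun x _ => rfl⟩

lemma faces_C_eq (hP : IsLatticePolytope P) (hPdim : affineSpan ℝ P = ⊤)
    (hPsym : (fun y : Fin d → ℝ => -y) '' P = P) :
    {F | IsFaceOf (coneOver P) F ∧ (eps d) '' F = F}
      = {({0} : Set ((Fin d → ℝ) × ℝ)), coneOver P} := by
  apply Set.Subset.antisymm
  · rintro F ⟨hF, hinv⟩
    rcases face_classification hP hPsym hF hinv with h | h
    · exact Or.inl h
    · exact Or.inr h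
  · rintro F (rfl | rfl)
    · exact ⟨face_zero hPdim, eps_image_zero⟩
    · exact ⟨face_self hP hPdim, eps_image_coneOver hPsym⟩

lemma faces_dual_eq (hP : IsLatticePolytope P) (hPdim : affineSpan ℝ P = ⊤)
    (hPsym : (fun y : Fin d → ℝ => -y) '' P = P) :
    {F | IsFaceOf (dualCone (coneOver P)) F ∧ (epsd d) '' F = F ∧ F ≠ dualCone (coneOver P)}
      = {({0} : Set (Module.Dual ℝ ((Fin d → ℝ) × ℝ)))} := by
  apply Set.Subset.antisymm
  · rintro F ⟨hF, hinv, hne⟩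
    rcases dual_face_classification hP hPdim hPsym hF hinv with h | h
    · exact h
    · exact absurd h hne
  · rintro F rfl
    exact ⟨dual_face_zero hP hPdim hPsym, epsd_image_zero, Ne.symm dualCone_ne_zero⟩

lemma truncPoly_coeff (k : ℕ) (p : ℝ[X]) (j : ℕ) :
    (truncPoly k p).coeff j = if j ≤ k then p.coeff j else 0 := by
  rw [truncPoly, Polynomial.finset_sum_coeff]
  have : ∀ i ∈ Finset.range (k+1), (C (p.coeff i) * X ^ i).coeff j
      = if j = i then p.coeff i else 0 := by
    intro i _
    rw [Polynomial.coeff_C_mul, Polynomial.coeff_X_pow, mul_ite, mul_one, mul_zero]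
  rw [Finset.sum_congr rfl this, Finset.sum_ite_eq (Finset.range (k+1)) j (fun i => p.coeff i)]
  simp only [Finset.mem_range]
  congr 1
  simp [Nat.lt_succ_iff]

lemma key_poly (d : ℕ) (hd : 1 ≤ d) :
    ((1 + X : ℝ[X]) ^ d) - truncPoly (d/2) ((1 - X) * (X + 1) ^ d)
      = X * ∑ i ∈ Finset.range d, C ((d.choose (min i (d - 1 - i)) : ℝ)) * X ^ i := by
  have hA : ∀ k : ℕ, (∑ i ∈ Finset.range d, C ((d.choose (min i (d - 1 - i)) : ℝ)) * X ^ i).coeff k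
      = if k < d then ((d.choose (min k (d - 1 - k)) : ℝ)) else 0 := by
    intro k
    rw [Polynomial.finset_sum_coeff]
    have : ∀ i ∈ Finset.range d, (C ((d.choose (min i (d - 1 - i)) : ℝ)) * X ^ i).coeff k
        = if k = i then ((d.choose (min i (d - 1 - i)) : ℝ)) else 0 := by
      intro i _
      rw [Polynomial.coeff_C_mul, Polynomial.coeff_X_pow, mul_ite, mul_one, mul_zero]
    rw [Finset.sum_congr rfl this,
      Finset.sum_ite_eq (Finset.range d) k (fun i => ((d.choose (min i (d - 1 - i)) : ℝ)))]
    simp [Finset.mem_range]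
  have hq : ∀ j : ℕ, ((1 - X : ℝ[X]) * (X + 1) ^ d).coeff j
      = (d.choose j : ℝ) - (if j = 0 then 0 else (d.choose (j - 1) : ℝ)) := by
    intro j
    have hexp : ((1 - X : ℝ[X]) * (X + 1) ^ d) = (X + 1) ^ d - X * (X + 1) ^ d := by ring
    rw [hexp, Polynomial.coeff_sub, Polynomial.coeff_X_add_one_pow]
    match j with
    | 0 => simp
    | (k+1) =>
      rw [Polynomial.coeff_X_mul, Polynomial.coeff_X_add_one_pow]
      simp
  ext j
  rw [Polynomial.coeff_sub, Polynomial.coeff_one_add_X_pow, truncPoly_coeff, hq j]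
  match j with
  | 0 =>
    rw [Polynomial.mul_coeff_zero]
    simp [Nat.choose_zero_right]
  | (k+1) =>
    rw [Polynomial.coeff_X_mul, hA k]
    by_cases h1 : k + 1 ≤ d / 2
    · have hklt : k < d := by omega
      have hmin : min k (d - 1 - k) = k := by
        apply min_eq_left
        omega
      rw [if_pos h1, if_neg (by omega : ¬ (k+1) = 0), if_pos hklt, hmin,
        Nat.add_sub_cancel]
      ring
    · rw [if_neg h1]
      by_cases h2 : k < d
      · have hmin : min k (d - 1 - k) = d - 1 - k := by
          apply min_eq_right
          omega
        rw [if_pos h2, hmin]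
        have h3 : d - 1 - k = d - (k + 1) := by omega
        have h4 : d.choose (d - (k+1)) = d.choose (k+1) := Nat.choose_symm (by omega)
        rw [h3, h4]
        ring
      · rw [if_neg h2]
        have : d.choose (k+1) = 0 := Nat.choose_eq_zero_of_lt (by omega)
        rw [this]
        simp

end Assemble

end Aux17
end Aux17

open Aux17 Polynomial

/-- Let `d ≥ 1`, `P ⊂ ℝ^d` a `d`-dimensional centrally symmetric
(`P = −P`) lattice polytope, `C` the cone over `P × {1}`, and `ε` the involution acting
by `−I` on `ℝ^d` and trivially on the height.  Then:
(i) the only `ε`-invariant faces of `C` are `{0}` and `C`, and likewise for the dual cone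
`Č` under the contragredient action;
(ii) `φ_C[t](ε) = (1+t)^d` (`φ` being characterized by `hphi`);
(iii) `s̃_ε(C,t) = (−1)^d · t · α_d(t)`, where `α_d(t) = Σ_{i<d} binom(d, min(i,d−1−i)) tⁱ`
is the unique polynomial of degree `d−1` with palindromic coefficients `a_i = a_{d−1−i}`
and `a_i = binom(d,i)` for `i ≤ ⌊(d−1)/2⌋`.  (Here `Gd`, characterized by the
hypothesized recursion, is the g-polynomial of faces of `Č` under the contragredient
action, entering the definition of `s̃_ε(C,t)`.) -/
theorem stmt17 (d : ℕ) (hd : 1 ≤ d)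
    (P : Set (Fin d → ℝ)) (hP : IsLatticePolytope P)
    (hPdim : affineSpan ℝ P = ⊤)
    (hPsym : (fun y : Fin d → ℝ => -y) '' P = P)
    (phi : Set ((Fin d → ℝ) × ℝ) → RatFunc ℝ)
    (hphi : ∀ F, IsFaceOf (coneOver P) F → ((LinearMap.prodMap (-LinearMap.id) LinearMap.id : Module.End ℝ ((Fin d → ℝ) × ℝ))) '' F = F →
      (phi F : LaurentSeries ℝ) =
        ((((PowerSeries.mk fun m => (nFix ((LinearMap.prodMap (-LinearMap.id) LinearMap.id : Module.End ℝ ((Fin d → ℝ) × ℝ))) F m : ℝ)) *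
          ((faceCharpoly ((LinearMap.prodMap (-LinearMap.id) LinearMap.id : Module.End ℝ ((Fin d → ℝ) × ℝ))) F).reverse : PowerSeries ℝ)) : PowerSeries ℝ) : LaurentSeries ℝ))
    (Hd Gd : Set (Module.Dual ℝ ((Fin d → ℝ) × ℝ)) → Polynomial ℝ)
    (hHd0 : Hd {0} = 1) (hGd0 : Gd {0} = 1)
    (hHdrec : ∀ D, IsFaceOf (dualCone (coneOver P)) D → (contragredient (LinearMap.prodMap (-LinearMap.id) LinearMap.id : Module.End ℝ ((Fin d → ℝ) × ℝ)) 2) '' D = D → D ≠ {0} →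
      algebraMap (Polynomial ℝ) (RatFunc ℝ) (Hd D) =
        algebraMap (Polynomial ℝ) (RatFunc ℝ) (faceCharpoly (contragredient (LinearMap.prodMap (-LinearMap.id) LinearMap.id : Module.End ℝ ((Fin d → ℝ) × ℝ)) 2) D) / (RatFunc.X - 1) *
          ∑ᶠ F ∈ {F | IsFaceOf D F ∧ (contragredient (LinearMap.prodMap (-LinearMap.id) LinearMap.id : Module.End ℝ ((Fin d → ℝ) × ℝ)) 2) '' F = F ∧ F ≠ D},
            algebraMap (Polynomial ℝ) (RatFunc ℝ) (Gd F) /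
              algebraMap (Polynomial ℝ) (RatFunc ℝ) (faceCharpoly (contragredient (LinearMap.prodMap (-LinearMap.id) LinearMap.id : Module.End ℝ ((Fin d → ℝ) × ℝ)) 2) F))
    (hGdrec : ∀ D, IsFaceOf (dualCone (coneOver P)) D → (contragredient (LinearMap.prodMap (-LinearMap.id) LinearMap.id : Module.End ℝ ((Fin d → ℝ) × ℝ)) 2) '' D = D → D ≠ {0} →
      Gd D = truncPoly ((faceDim D - 1) / 2) ((1 - Polynomial.X) * Hd D)) :
    (∀ F, IsFaceOf (coneOver P) F →
      (LinearMap.prodMap (-LinearMap.id) LinearMap.id :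
          Module.End ℝ ((Fin d → ℝ) × ℝ)) '' F = F →
      F = {0} ∨ F = coneOver P) ∧
    (∀ G, IsFaceOf (dualCone (coneOver P)) G →
      (contragredient (LinearMap.prodMap (-LinearMap.id) LinearMap.id :
          Module.End ℝ ((Fin d → ℝ) × ℝ)) 2) '' G = G →
      G = {0} ∨ G = dualCone (coneOver P)) ∧
    phi (coneOver P) =
      algebraMap (Polynomial ℝ) (RatFunc ℝ) ((1 + Polynomial.X) ^ d) ∧
    (∀ S : RatFunc ℝ,
      S = ∑ᶠ F ∈ {F | IsFaceOf (coneOver P) F ∧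
            (LinearMap.prodMap (-LinearMap.id) LinearMap.id :
              Module.End ℝ ((Fin d → ℝ) × ℝ)) '' F = F},
          ((-1 : ℝ) ^ (d + 1 - faceDim F) *
              faceDet (LinearMap.prodMap (-LinearMap.id) LinearMap.id :
                Module.End ℝ ((Fin d → ℝ) × ℝ)) F) •
            (phi F *
              algebraMap (Polynomial ℝ) (RatFunc ℝ) (Gd (dualFace (coneOver P) F))) →
      S = algebraMap (Polynomial ℝ) (RatFunc ℝ)
            ((-1 : Polynomial ℝ) ^ d * (Polynomial.X *
              ∑ i ∈ Finset.range d,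
                Polynomial.C ((d.choose (min i (d - 1 - i)) : ℝ)) * Polynomial.X ^ i))) := by
    -- phi values
  have hphiC : phi (coneOver P) = algebraMap (Polynomial ℝ) (RatFunc ℝ) ((1 + X) ^ d) := by
    have h := hphi (coneOver P) (face_self hP hPdim) (eps_image_coneOver hPsym)
    rw [PS_cone hP hPdim hPsym] at h
    apply (show Function.Injective (fun f : RatFunc ℝ => (f : LaurentSeries ℝ)) from RingHom.injective _)
    dsimp only
    rw [h, coe_ratfunc_poly]
  have hphi0 : phi ({0} : Set ((Fin d → ℝ) × ℝ)) = 1 := by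
    have h := hphi ({0} : Set ((Fin d → ℝ) × ℝ)) (face_zero hPdim) eps_image_zero
    rw [PS_zeroface] at h
    apply (show Function.Injective (fun f : RatFunc ℝ => (f : LaurentSeries ℝ)) from RingHom.injective _)
    dsimp only
    rw [h, map_one, map_one]
  refine ⟨?_, ?_, hphiC, ?_⟩
  · intro F hF hinv
    exact face_classification hP hPsym hF hinv
  · intro G hG hinv
    exact dual_face_classification hP hPdim hPsym hG hinv
  · intro S hS
    -- the value of Gd on the dual cone
    have hDface := dual_face_self hP hPdim
    have hDinv := epsd_image_dualCone (d := d) hPsym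
    have hDne : dualCone (coneOver P) ≠ ({0} : Set (Module.Dual ℝ ((Fin d → ℝ) × ℝ))) :=
      dualCone_ne_zero
    have hcpD : faceCharpoly (epsd d) (dualCone (coneOver P)) = (X + 1) ^ d * (X - 1) := by
      rw [(face_top_spec (epsd d) (dualCone (coneOver P)) (span_dualCone_top hP hPdim)).1]
      rw [epsd_eq, charpoly_eps_dual]
    have hHd := hHdrec (dualCone (coneOver P)) hDface hDinv hDne
    rw [faces_dual_eq hP hPdim hPsym, finsum_mem_singleton, hGd0, faceCharpoly_zero,
      map_one, div_one, mul_one, hcpD] at hHd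
    have hX1 : (RatFunc.X - 1 : RatFunc ℝ) = algebraMap (Polynomial ℝ) (RatFunc ℝ) (X - 1) := by
      rw [map_sub, map_one, RatFunc.algebraMap_X]
    have hne : algebraMap (Polynomial ℝ) (RatFunc ℝ) (X - 1 : ℝ[X]) ≠ 0 := by
      intro h
      have : (X - 1 : ℝ[X]) = 0 := RatFunc.algebraMap_injective ℝ (by rw [h, map_zero])
      have h2 := congrArg (fun p => Polynomial.coeff p 1) this
      simp [Polynomial.coeff_one] at h2
    have hHdval : Hd (dualCone (coneOver P)) = (X + 1) ^ d := by
      apply RatFunc.algebraMap_injective ℝ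
      rw [hHd, hX1, map_mul, mul_div_assoc, div_self hne, mul_one]
    have hGdD := hGdrec (dualCone (coneOver P)) hDface hDinv hDne
    rw [hHdval, faceDim_top (span_dualCone_top hP hPdim), finrank_dual_Vd,
      Nat.add_sub_cancel] at hGdD
    -- evaluate the finsum
    rw [faces_C_eq hP hPdim hPsym] at hS
    rw [finsum_mem_insert _
        (by
          rw [Set.mem_singleton_iff]
          exact Ne.symm (coneOver_ne_zero hP hPdim hPsym))
        (Set.finite_singleton _), finsum_mem_singleton] at hS
    rw [faceDim_zero, faceDet_zero, Nat.sub_zero, mul_one, dualFace_zeroface, hphi0,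
      one_mul] at hS
    rw [faceDim_top (span_coneOver_top hP hPdim hPsym), finrank_Vd, Nat.sub_self, pow_zero,
      one_mul, (face_top_spec (eps d) (coneOver P) (span_coneOver_top hP hPdim hPsym)).2,
      det_eps, dualFace_selfface hP hPdim hPsym, hGd0, map_one, mul_one, hphiC] at hS
    rw [hS, hGdD]
    rw [RatFunc.smul_eq_C_mul, RatFunc.smul_eq_C_mul, ← RatFunc.algebraMap_C,
      ← RatFunc.algebraMap_C, ← map_mul, ← map_mul, ← map_add]
    congr 1
    have hkey := key_poly d hd
    have hC1 : (Polynomial.C ((-1 : ℝ) ^ (d+1)) : ℝ[X]) = (-1 : ℝ[X]) ^ (d+1) := by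
      rw [map_pow, map_neg, map_one]
    have hC2 : (Polynomial.C ((-1 : ℝ) ^ d) : ℝ[X]) = (-1 : ℝ[X]) ^ d := by
      rw [map_pow, map_neg, map_one]
    rw [hC1, hC2, ← hkey]
    ring
end
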